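/- arXiv:1702.00433 — 11 statements merged into one kernel-verified Lean document; each statement's English description precedes it below -/
import Mathlib

section
/- Let V and H be real inner product spaces and T : V → H a real-linear map. Let σ* > 0 and σ ≥ 0 be real numbers, and let e, g ∈ V and r ∈ H satisfy the residual identity ‖e‖_V² + σ‖T e‖_H² = ⟨g, e⟩_V + ⟨r, T e⟩_H together with the embedding inequality σ*‖T e‖_H² ≤ ‖e‖_V². Define Θ = 2σ*/(σ* + σ) and θ = 1/σ* if σ ≤ σ*, and Θ = 1 and θ = 1/σ if σ > σ*. Then ‖e‖_V² + σ‖T e‖_H² ≤ Θ·(‖g‖_V² + θ·‖r‖_H²). -/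
set_option maxHeartbeats 1000000 in
/-- Abstract Hilbert-space form of the paper's main a posteriori error majorant
(Theorem 2), valid for every reaction coefficient `σ ≥ 0`. -/
theorem robust_majorant_abstract
    {V H : Type*} [NormedAddCommGroup V] [InnerProductSpace ℝ V]
    [NormedAddCommGroup H] [InnerProductSpace ℝ H]
    (T : V →ₗ[ℝ] H) (σs σ : ℝ) (hσs : 0 < σs) (hσ : 0 ≤ σ)
    (e g : V) (r : H)
    (hres : ‖e‖ ^ 2 + σ * ‖T e‖ ^ 2 = (inner ℝ g e : ℝ) + (inner ℝ r (T e) : ℝ))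
    (hemb : σs * ‖T e‖ ^ 2 ≤ ‖e‖ ^ 2) :
    ‖e‖ ^ 2 + σ * ‖T e‖ ^ 2 ≤
      (if σ ≤ σs then 2 * σs / (σs + σ) else 1) *
        (‖g‖ ^ 2 + (if σ ≤ σs then 1 / σs else 1 / σ) * ‖r‖ ^ 2) := by
  set a := ‖g‖ with ha
  set b := ‖r‖ with hb
  set E := ‖e‖ with hE
  set s := ‖T e‖ with hs
  have ha0 : 0 ≤ a := norm_nonneg _
  have hb0 : 0 ≤ b := norm_nonneg _
  have hE0 : 0 ≤ E := norm_nonneg _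
  have hs0 : 0 ≤ s := norm_nonneg _
  have hkey : E ^ 2 + σ * s ^ 2 ≤ a * E + b * s := by
    calc E ^ 2 + σ * s ^ 2 = (inner ℝ g e : ℝ) + (inner ℝ r (T e) : ℝ) := hres
    _ ≤ a * E + b * s :=
      add_le_add (real_inner_le_norm g e) (real_inner_le_norm r (T e))
  have hM0 : 0 ≤ E ^ 2 + σ * s ^ 2 := by positivity
  rcases eq_or_lt_of_le hM0 with hM | hM
  · rw [← hM]
    split_ifs with h
    · have h1 : 0 ≤ 2 * σs / (σs + σ) := by
        apply div_nonneg <;> linarith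
      have h2 : 0 ≤ 1 / σs := by positivity
      have h3 : 0 ≤ a ^ 2 + 1 / σs * b ^ 2 := by positivity
      exact mul_nonneg h1 h3
    · have hσ0 : 0 < σ := hσs.trans (not_le.mp h)
      have h2 : 0 ≤ 1 / σ := by positivity
      have h3 : 0 ≤ a ^ 2 + 1 / σ * b ^ 2 := by positivity
      rw [one_mul]; exact h3
  · have hsq : (E ^ 2 + σ * s ^ 2) * (E ^ 2 + σ * s ^ 2) ≤ (a * E + b * s) * (a * E + b * s) :=
      mul_self_le_mul_self hM0 hkey
    split_ifs with h
    · -- case σ ≤ σs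
      have hden : 0 < σs + σ := by linarith
      have hcs : σs * ((E ^ 2 + σ * s ^ 2) * (E ^ 2 + σ * s ^ 2)) ≤
          (σs * a ^ 2 + b ^ 2) * (E ^ 2 + σs * s ^ 2) := by
        nlinarith [mul_le_mul_of_nonneg_left hsq hσs.le, sq_nonneg (σs * a * s - b * E)]
      have h2 : (σs + σ) * (E ^ 2 + σs * s ^ 2) ≤ 2 * σs * (E ^ 2 + σ * s ^ 2) := by
        nlinarith [mul_le_mul_of_nonneg_left hemb (by linarith : (0:ℝ) ≤ σs - σ)]
      have hq0 : 0 ≤ σs * a ^ 2 + b ^ 2 := by positivity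
      have h3 : (σs * (σs + σ) * (E ^ 2 + σ * s ^ 2)) * (E ^ 2 + σ * s ^ 2) ≤
          (2 * σs * (σs * a ^ 2 + b ^ 2)) * (E ^ 2 + σ * s ^ 2) := by
        nlinarith [mul_le_mul_of_nonneg_left hcs hden.le,
          mul_le_mul_of_nonneg_left h2 hq0]
      have h4 : σs * (σs + σ) * (E ^ 2 + σ * s ^ 2) ≤ 2 * σs * (σs * a ^ 2 + b ^ 2) :=
        le_of_mul_le_mul_right h3 hM
      have h5 : (σs + σ) * (E ^ 2 + σ * s ^ 2) ≤ 2 * σs * a ^ 2 + 2 * b ^ 2 := by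
        have := le_of_mul_le_mul_left (by nlinarith [h4] :
          σs * ((σs + σ) * (E ^ 2 + σ * s ^ 2)) ≤ σs * (2 * σs * a ^ 2 + 2 * b ^ 2)) hσs
        exact this
      rw [div_mul_eq_mul_div, le_div_iff₀ hden]
      have hexp : 2 * σs * (a ^ 2 + 1 / σs * b ^ 2) = 2 * σs * a ^ 2 + 2 * b ^ 2 := by
        field_simp
      rw [mul_comm (2 * σs), hexp] at *
      linarith [h5]
    · -- case σ > σs
      have hσ0 : 0 < σ := hσs.trans (not_le.mp h)
      have hcs : σ * ((E ^ 2 + σ * s ^ 2) * (E ^ 2 + σ * s ^ 2)) ≤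
          (σ * a ^ 2 + b ^ 2) * (E ^ 2 + σ * s ^ 2) := by
        have hid : (σ * a ^ 2 + b ^ 2) * (E ^ 2 + σ * s ^ 2) =
            σ * ((a * E + b * s) * (a * E + b * s)) + (σ * a * s - b * E) ^ 2 := by ring
        have h1 := mul_le_mul_of_nonneg_left hsq hσ0.le
        linarith [sq_nonneg (σ * a * s - b * E)]
      have h4 : σ * (E ^ 2 + σ * s ^ 2) ≤ σ * a ^ 2 + b ^ 2 := by
        have h3 : (σ * (E ^ 2 + σ * s ^ 2)) * (E ^ 2 + σ * s ^ 2) ≤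
            (σ * a ^ 2 + b ^ 2) * (E ^ 2 + σ * s ^ 2) := by nlinarith [hcs]
        exact le_of_mul_le_mul_right h3 hM
      have hexp : 1 * (a ^ 2 + 1 / σ * b ^ 2) = (σ * a ^ 2 + b ^ 2) / σ := by
        field_simp
      rw [hexp, le_div_iff₀ hσ0]
      nlinarith [h4]
end

section
/- Let V and H be real inner product spaces and T : V → H a real-linear map. Let σ* > 0 and σ be real numbers with 0 ≤ σ ≤ σ*, and let e, g ∈ V and r ∈ H satisfy ‖e‖_V² + σ‖T e‖_H² = ⟨g, e⟩_V + ⟨r, T e⟩_H and σ*‖T e‖_H² ≤ ‖e‖_V². Then ‖e‖_V² + σ‖T e‖_H² ≤ (2σ*/(σ* + σ))·(‖g‖_V² + (1/σ*)·‖r‖_H²). -/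
/-- Small-reaction-coefficient case (`σ ≤ σ*`) of the paper's main a posteriori
error majorant (Theorem 2), in abstract Hilbert-space form. -/
theorem majorant_small_sigma_abstract
    {V H : Type*} [NormedAddCommGroup V] [InnerProductSpace ℝ V]
    [NormedAddCommGroup H] [InnerProductSpace ℝ H]
    (T : V →ₗ[ℝ] H) (σs σ : ℝ) (hσs : 0 < σs) (hσ0 : 0 ≤ σ) (hσ : σ ≤ σs)
    (e g : V) (r : H)
    (hres : ‖e‖ ^ 2 + σ * ‖T e‖ ^ 2 = (inner ℝ g e : ℝ) + (inner ℝ r (T e) : ℝ))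
    (hemb : σs * ‖T e‖ ^ 2 ≤ ‖e‖ ^ 2) :
    ‖e‖ ^ 2 + σ * ‖T e‖ ^ 2 ≤
      (2 * σs / (σs + σ)) * (‖g‖ ^ 2 + (1 / σs) * ‖r‖ ^ 2) := by
  set a := ‖e‖ with ha
  set t := ‖T e‖ with ht
  set G := ‖g‖ with hG
  set R := ‖r‖ with hR
  set M := a ^ 2 + σ * t ^ 2 with hMdef
  set K := G ^ 2 + (1 / σs) * R ^ 2 with hKdef
  have ha0 : 0 ≤ a := norm_nonneg _
  have ht0 : 0 ≤ t := norm_nonneg _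
  have hG0 : 0 ≤ G := norm_nonneg _
  have hR0 : 0 ≤ R := norm_nonneg _
  have hden : 0 < σs + σ := by linarith
  have hM0 : 0 ≤ M := by positivity
  have hK0 : 0 ≤ K := by positivity
  -- Step 1: M ≤ G*a + R*t
  have h1 : M ≤ G * a + R * t := by
    have i1 : (inner ℝ g e : ℝ) ≤ G * a := real_inner_le_norm g e
    have i2 : (inner ℝ r (T e) : ℝ) ≤ R * t := real_inner_le_norm r (T e)
    linarith [hres, hMdef, i1, i2]
  -- Step 2: weighted Cauchy-Schwarz: (G*a + R*t)^2 ≤ K * (a^2 + σs * t^2)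
  have h2 : (G * a + R * t) ^ 2 ≤ K * (a ^ 2 + σs * t ^ 2) := by
    rw [hKdef]
    have key : σs * ((G ^ 2 + (1 / σs) * R ^ 2) * (a ^ 2 + σs * t ^ 2)
        - (G * a + R * t) ^ 2) = (σs * G * t - R * a) ^ 2 := by
      field_simp; ring
    nlinarith [sq_nonneg (σs * G * t - R * a), hσs]
  -- Step 3: (σs+σ) * (a^2 + σs * t^2) ≤ 2*σs * M
  have h3 : (σs + σ) * (a ^ 2 + σs * t ^ 2) ≤ 2 * σs * M := by
    rw [hMdef]
    nlinarith [hemb, hσ, hσ0]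
  -- Combine: M^2 * (σs+σ) ≤ 2*σs*K*M
  have hS0 : 0 ≤ a ^ 2 + σs * t ^ 2 := by positivity
  have hMsq : M ^ 2 ≤ K * (a ^ 2 + σs * t ^ 2) := by
    have h1' : M ^ 2 ≤ (G * a + R * t) ^ 2 := by
      have hGa : 0 ≤ G * a + R * t := by positivity
      nlinarith [h1, hM0]
    linarith
  have h4 : M ^ 2 * (σs + σ) ≤ 2 * σs * K * M := by
    calc M ^ 2 * (σs + σ) ≤ K * (a ^ 2 + σs * t ^ 2) * (σs + σ) :=
          mul_le_mul_of_nonneg_right hMsq hden.le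
      _ = K * ((σs + σ) * (a ^ 2 + σs * t ^ 2)) := by ring
      _ ≤ K * (2 * σs * M) := mul_le_mul_of_nonneg_left h3 hK0
      _ = 2 * σs * K * M := by ring
  -- Conclude
  rw [div_mul_eq_mul_div, le_div_iff₀ hden]
  have hgoal : M * (σs + σ) ≤ 2 * σs * K := by
    rcases eq_or_lt_of_le hM0 with hMeq | hMpos
    · rw [← hMeq, zero_mul]
      positivity
    · have h5 : M * (M * (σs + σ)) ≤ M * (2 * σs * K) := by
        calc M * (M * (σs + σ)) = M ^ 2 * (σs + σ) := by ring
          _ ≤ 2 * σs * K * M := h4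
          _ = M * (2 * σs * K) := by ring
      exact le_of_mul_le_mul_left h5 hMpos
  calc (a ^ 2 + σ * t ^ 2) * (σs + σ) = M * (σs + σ) := by rw [hMdef]
    _ ≤ 2 * σs * K := hgoal
end

section
/- Let V and H be real inner product spaces and T : V → H a real-linear map. Let σ > 0 be a real number, and let e, g ∈ V and r ∈ H satisfy the identity ‖e‖_V² + σ‖T e‖_H² = ⟨g, e⟩_V + ⟨r, T e⟩_H. Then ‖e‖_V² + σ‖T e‖_H² ≤ ‖g‖_V² + (1/σ)·‖r‖_H². -/
/-- Abstract Hilbert-space form of Aubin's a posteriori error majorant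
(Theorem 1). -/
theorem aubin_majorant_abstract
    {V H : Type*} [NormedAddCommGroup V] [InnerProductSpace ℝ V]
    [NormedAddCommGroup H] [InnerProductSpace ℝ H]
    (T : V →ₗ[ℝ] H) (σ : ℝ) (hσ : 0 < σ)
    (e g : V) (r : H)
    (hres : ‖e‖ ^ 2 + σ * ‖T e‖ ^ 2 = (inner ℝ g e : ℝ) + (inner ℝ r (T e) : ℝ)) :
    ‖e‖ ^ 2 + σ * ‖T e‖ ^ 2 ≤ ‖g‖ ^ 2 + (1 / σ) * ‖r‖ ^ 2 := by
  have h1 := real_inner_le_norm g e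
  have h2 := real_inner_le_norm r (T e)
  have hσ' : σ ≠ 0 := ne_of_gt hσ
  have key : σ * (‖e‖ ^ 2 + σ * ‖T e‖ ^ 2) ≤ σ * ‖g‖ ^ 2 + ‖r‖ ^ 2 := by
    nlinarith [sq_nonneg (‖g‖ - ‖e‖), sq_nonneg (‖r‖ - σ * ‖T e‖), norm_nonneg e,
      norm_nonneg (T e), sq_nonneg σ]
  have hinv : σ * (1 / σ) = 1 := mul_one_div_cancel hσ'
  nlinarith [key, hinv, hσ]
end

section
/- Let f be continuous on [0,1], let σ*, σ be real numbers with σ* > 0 and 0 ≤ σ ≤ σ*. Let u be twice continuously differentiable on [0,1] with −u''(x) + σ·u(x) = f(x) for all x ∈ [0,1] and u(0) = u(1) = 0; let v be continuously differentiable on [0,1] with v(0) = v(1) = 0; let z be continuously differentiable on [0,1]. Assume σ*·∫₀¹(v−u)² dx ≤ ∫₀¹((v−u)')² dx. Then ∫₀¹((v−u)')² dx + σ·∫₀¹(v−u)² dx ≤ (2σ*/(σ*+σ))·( ∫₀¹(v'+z)² dx + (1/σ*)·∫₀¹(f − σ·v − z')² dx ). -/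
open Set intervalIntegral


lemma cs_int (g h : ℝ → ℝ) (hg : ContinuousOn g (Icc 0 1))
    (hh : ContinuousOn h (Icc 0 1)) :
    (∫ x in (0:ℝ)..1, g x * h x) ≤
      Real.sqrt (∫ x in (0:ℝ)..1, g x ^ 2) * Real.sqrt (∫ x in (0:ℝ)..1, h x ^ 2) := by
  have h01 : (0:ℝ) ≤ 1 := by norm_num
  have intg : ∀ {F : ℝ → ℝ}, ContinuousOn F (Icc 0 1) →
      IntervalIntegrable F MeasureTheory.volume 0 1 := by
    intro F hF
    apply ContinuousOn.intervalIntegrable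
    rwa [uIcc_of_le h01]
  set A := ∫ x in (0:ℝ)..1, g x ^ 2 with hA
  set B := ∫ x in (0:ℝ)..1, h x ^ 2 with hB
  set C := ∫ x in (0:ℝ)..1, g x * h x with hC
  have iG2 : IntervalIntegrable (fun x => g x ^ 2) MeasureTheory.volume 0 1 := intg (hg.pow 2)
  have iH2 : IntervalIntegrable (fun x => h x ^ 2) MeasureTheory.volume 0 1 := intg (hh.pow 2)
  have iGH : IntervalIntegrable (fun x => g x * h x) MeasureTheory.volume 0 1 := intg (hg.mul hh)
  have hq : ∀ t : ℝ, 0 ≤ A * (t * t) + (2 * C) * t + B := by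
    intro t
    have h0 : (0:ℝ) ≤ ∫ x in (0:ℝ)..1, (t * g x + h x) ^ 2 :=
      intervalIntegral.integral_nonneg h01 (fun x _ => sq_nonneg _)
    have hm : (∫ x in (0:ℝ)..1, (t * g x + h x) ^ 2)
        = A * (t * t) + (2 * C) * t + B := by
      have e1 : (∫ x in (0:ℝ)..1, (t * g x + h x) ^ 2)
          = ∫ x in (0:ℝ)..1, (t ^ 2 * g x ^ 2 + ((2 * t) * (g x * h x) + h x ^ 2)) := by
        apply intervalIntegral.integral_congr
        intro x _
        ring
      rw [e1, intervalIntegral.integral_add (iG2.const_mul _)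
          ((iGH.const_mul _).add iH2),
        intervalIntegral.integral_add (iGH.const_mul _) iH2,
        intervalIntegral.integral_const_mul, intervalIntegral.integral_const_mul]
      ring
    rw [hm] at h0; linarith
  have hd := discrim_le_zero hq
  rw [discrim] at hd
  have hA0 : 0 ≤ A := intervalIntegral.integral_nonneg h01 (fun x _ => sq_nonneg _)
  have hB0 : 0 ≤ B := intervalIntegral.integral_nonneg h01 (fun x _ => sq_nonneg _)
  have hC2 : C ^ 2 ≤ A * B := by nlinarith
  calc C ≤ |C| := le_abs_self _
    _ = Real.sqrt (C ^ 2) := (Real.sqrt_sq_eq_abs C).symm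
    _ ≤ Real.sqrt (A * B) := Real.sqrt_le_sqrt hC2
    _ = Real.sqrt A * Real.sqrt B := Real.sqrt_mul hA0 B

lemma ibp_zero (g g' h h' : ℝ → ℝ)
    (hg : ∀ x ∈ Icc (0:ℝ) 1, HasDerivWithinAt g (g' x) (Icc 0 1) x)
    (hh : ∀ x ∈ Icc (0:ℝ) 1, HasDerivWithinAt h (h' x) (Icc 0 1) x)
    (hg'c : ContinuousOn g' (Icc 0 1)) (hh'c : ContinuousOn h' (Icc 0 1))
    (h0 : h 0 = 0) (h1 : h 1 = 0) :
    ∫ x in (0:ℝ)..1, (g' x * h x + g x * h' x) = 0 := by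
  have h01 : (0:ℝ) ≤ 1 := by norm_num
  have hgc : ContinuousOn g (Icc 0 1) := fun x hx => (hg x hx).continuousWithinAt
  have hhc : ContinuousOn h (Icc 0 1) := fun x hx => (hh x hx).continuousWithinAt
  have key := intervalIntegral.integral_eq_sub_of_hasDeriv_right_of_le h01
    (f := fun y => g y * h y) (f' := fun y => g' y * h y + g y * h' y)
    (hgc.mul hhc)
    (by
      intro x hx
      have hx' : x ∈ Icc (0:ℝ) 1 := Ioo_subset_Icc_self hx
      exact ((hg x hx').mul (hh x hx')).mono_of_mem_nhdsWithin
        (Icc_mem_nhdsGT_of_mem ⟨hx.1.le, hx.2⟩))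
    (by
      apply ContinuousOn.intervalIntegrable
      rw [uIcc_of_le h01]
      exact (hg'c.mul hhc).add (hgc.mul hh'c))
  rw [key]
  simp [h0, h1]

lemma final_alg (σs σ D L R1 R2 : ℝ) (hσs : 0 < σs) (hσ0 : 0 ≤ σ) (hσ : σ ≤ σs)
    (hD : 0 ≤ D) (hL : 0 ≤ L) (hR1 : 0 ≤ R1) (hR2 : 0 ≤ R2)
    (hfried : σs * L ≤ D)
    (hkey : D + σ * L ≤ Real.sqrt R1 * Real.sqrt D + Real.sqrt R2 * Real.sqrt L) :
    D + σ * L ≤ (2 * σs / (σs + σ)) * (R1 + (1 / σs) * R2) := by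
  obtain ⟨a, ha0, rfl⟩ : ∃ a, 0 ≤ a ∧ R1 = a ^ 2 :=
    ⟨_, Real.sqrt_nonneg R1, (Real.sq_sqrt hR1).symm⟩
  obtain ⟨b, hb0, rfl⟩ : ∃ b, 0 ≤ b ∧ R2 = b ^ 2 :=
    ⟨_, Real.sqrt_nonneg R2, (Real.sq_sqrt hR2).symm⟩
  obtain ⟨c, hc0, rfl⟩ : ∃ c, 0 ≤ c ∧ D = c ^ 2 :=
    ⟨_, Real.sqrt_nonneg D, (Real.sq_sqrt hD).symm⟩
  obtain ⟨d, hd0, rfl⟩ : ∃ d, 0 ≤ d ∧ L = d ^ 2 :=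
    ⟨_, Real.sqrt_nonneg L, (Real.sq_sqrt hL).symm⟩
  rw [Real.sqrt_sq ha0, Real.sqrt_sq hb0, Real.sqrt_sq hc0, Real.sqrt_sq hd0] at hkey
  have hσσ : 0 < σs + σ := by linarith
  rw [div_mul_eq_mul_div, le_div_iff₀ hσσ]
  have hRHS : 2 * σs * (a ^ 2 + 1 / σs * b ^ 2) = 2 * σs * a ^ 2 + 2 * b ^ 2 := by
    field_simp
  rw [hRHS]
  set M := c ^ 2 + σ * d ^ 2 with hM
  have hM0 : 0 ≤ M := by positivity
  rcases eq_or_lt_of_le hM0 with hMz | hMpos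
  · rw [← hMz, zero_mul]
    positivity
  · have hkeysq : M ^ 2 ≤ (a * c + b * d) ^ 2 := by nlinarith
    have h1 : σs * (a * c + b * d) ^ 2 ≤ (σs * a ^ 2 + b ^ 2) * (c ^ 2 + σs * d ^ 2) := by
      nlinarith [sq_nonneg (σs * a * d - b * c)]
    have h2 : (σs + σ) * (c ^ 2 + σs * d ^ 2) ≤ 2 * σs * M := by
      nlinarith [mul_nonneg (sub_nonneg.2 hσ) (sub_nonneg.2 hfried)]
    have s1 : σs * M ^ 2 ≤ σs * (a * c + b * d) ^ 2 :=
      mul_le_mul_of_nonneg_left hkeysq hσs.le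
    have s2 : σs * M ^ 2 ≤ (σs * a ^ 2 + b ^ 2) * (c ^ 2 + σs * d ^ 2) := le_trans s1 h1
    have s3 : (σs + σ) * (σs * M ^ 2) ≤
        (σs + σ) * ((σs * a ^ 2 + b ^ 2) * (c ^ 2 + σs * d ^ 2)) :=
      mul_le_mul_of_nonneg_left s2 hσσ.le
    have s4 := mul_le_mul_of_nonneg_left h2 (by positivity : (0:ℝ) ≤ σs * a ^ 2 + b ^ 2)
    have hfin : σs * (σs + σ) * M ^ 2 ≤ 2 * σs * (σs * a ^ 2 + b ^ 2) * M := by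
      nlinarith [s3, s4]
    have hform : (σs * M) * ((σs + σ) * M) ≤ (σs * M) * (2 * (σs * a ^ 2 + b ^ 2)) := by
      linarith [hfin]
    have hcanc := le_of_mul_le_mul_left hform (mul_pos hσs hMpos)
    linarith [hcanc]

/-- The paper's main consistent a posteriori error majorant (Theorem 2) for the
one-dimensional reaction–diffusion Dirichlet problem `−u'' + σu = f`,
`u(0) = u(1) = 0`, in the case `0 ≤ σ ≤ σ*`. -/
theorem majorant_1d_small_sigma
    (f u u' u'' v v' z z' : ℝ → ℝ) (σs σ : ℝ)
    (hσs : 0 < σs) (hσ0 : 0 ≤ σ) (hσ : σ ≤ σs)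
    (hf : ContinuousOn f (Icc 0 1))
    (hu' : ∀ x ∈ Icc (0:ℝ) 1, HasDerivWithinAt u (u' x) (Icc 0 1) x)
    (hu'' : ∀ x ∈ Icc (0:ℝ) 1, HasDerivWithinAt u' (u'' x) (Icc 0 1) x)
    (hu''c : ContinuousOn u'' (Icc 0 1))
    (hode : ∀ x ∈ Icc (0:ℝ) 1, -u'' x + σ * u x = f x)
    (hu0 : u 0 = 0) (hu1 : u 1 = 0)
    (hv' : ∀ x ∈ Icc (0:ℝ) 1, HasDerivWithinAt v (v' x) (Icc 0 1) x)
    (hv'c : ContinuousOn v' (Icc 0 1))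
    (hv0 : v 0 = 0) (hv1 : v 1 = 0)
    (hz' : ∀ x ∈ Icc (0:ℝ) 1, HasDerivWithinAt z (z' x) (Icc 0 1) x)
    (hz'c : ContinuousOn z' (Icc 0 1))
    (hfried : σs * ∫ x in (0:ℝ)..1, (v x - u x) ^ 2 ≤
      ∫ x in (0:ℝ)..1, (v' x - u' x) ^ 2) :
    (∫ x in (0:ℝ)..1, (v' x - u' x) ^ 2) +
        σ * ∫ x in (0:ℝ)..1, (v x - u x) ^ 2 ≤
      (2 * σs / (σs + σ)) *
        ((∫ x in (0:ℝ)..1, (v' x + z x) ^ 2) +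
          (1 / σs) * ∫ x in (0:ℝ)..1, (f x - σ * v x - z' x) ^ 2) := by
  have h01 : (0:ℝ) ≤ 1 := by norm_num
  -- continuity facts
  have huc : ContinuousOn u (Icc 0 1) := fun x hx => (hu' x hx).continuousWithinAt
  have hu'c : ContinuousOn u' (Icc 0 1) := fun x hx => (hu'' x hx).continuousWithinAt
  have hvc : ContinuousOn v (Icc 0 1) := fun x hx => (hv' x hx).continuousWithinAt
  have hzc : ContinuousOn z (Icc 0 1) := fun x hx => (hz' x hx).continuousWithinAt
  have hec : ContinuousOn (fun x => v x - u x) (Icc 0 1) := hvc.sub huc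
  have he'c : ContinuousOn (fun x => v' x - u' x) (Icc 0 1) := hv'c.sub hu'c
  have hpc : ContinuousOn (fun x => v' x + z x) (Icc 0 1) := hv'c.add hzc
  have hqc : ContinuousOn (fun x => f x - σ * v x - z' x) (Icc 0 1) :=
    (hf.sub (continuousOn_const.mul hvc)).sub hz'c
  have intg : ∀ {F : ℝ → ℝ}, ContinuousOn F (Icc 0 1) →
      IntervalIntegrable F MeasureTheory.volume 0 1 := by
    intro F hF
    apply ContinuousOn.intervalIntegrable
    rwa [uIcc_of_le h01]
  -- the two integration-by-parts identities
  have I1 : ∫ x in (0:ℝ)..1,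
      (u'' x * (v x - u x) + u' x * (v' x - u' x)) = 0 := by
    apply ibp_zero u' u'' (fun x => v x - u x) (fun x => v' x - u' x) hu''
      (fun x hx => (hv' x hx).sub (hu' x hx)) hu''c he'c
    · simp [hv0, hu0]
    · simp [hv1, hu1]
  have I2 : ∫ x in (0:ℝ)..1,
      (z' x * (v x - u x) + z x * (v' x - u' x)) = 0 := by
    apply ibp_zero z z' (fun x => v x - u x) (fun x => v' x - u' x) hz'
      (fun x hx => (hv' x hx).sub (hu' x hx)) hz'c he'c
    · simp [hv0, hu0]
    · simp [hv1, hu1]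
  -- integrability of all pieces
  have iA : IntervalIntegrable (fun x => (v' x - u' x) ^ 2) MeasureTheory.volume 0 1 :=
    intg (he'c.pow 2)
  have iB : IntervalIntegrable (fun x => σ * (v x - u x) ^ 2) MeasureTheory.volume 0 1 :=
    intg (continuousOn_const.mul (hec.pow 2))
  have iC : IntervalIntegrable
      (fun x => u'' x * (v x - u x) + u' x * (v' x - u' x)) MeasureTheory.volume 0 1 :=
    intg ((hu''c.mul hec).add (hu'c.mul he'c))
  have iD : IntervalIntegrable
      (fun x => z' x * (v x - u x) + z x * (v' x - u' x)) MeasureTheory.volume 0 1 :=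
    intg ((hz'c.mul hec).add (hzc.mul he'c))
  have iP : IntervalIntegrable
      (fun x => (v' x + z x) * (v' x - u' x)) MeasureTheory.volume 0 1 :=
    intg (hpc.mul he'c)
  have iQ : IntervalIntegrable
      (fun x => (-(f x - σ * v x - z' x)) * (v x - u x)) MeasureTheory.volume 0 1 :=
    intg (hqc.neg.mul hec)
  -- the pointwise identity combined into one integral equation
  have hsplit : (∫ x in (0:ℝ)..1,
        ((v' x - u' x) ^ 2 + σ * (v x - u x) ^ 2 +
          (u'' x * (v x - u x) + u' x * (v' x - u' x)) +
          (z' x * (v x - u x) + z x * (v' x - u' x))))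
      = ∫ x in (0:ℝ)..1,
        ((v' x + z x) * (v' x - u' x) + (-(f x - σ * v x - z' x)) * (v x - u x)) := by
    apply intervalIntegral.integral_congr
    intro x hx
    rw [uIcc_of_le h01] at hx
    have hox := hode x hx
    simp only []
    linear_combination (u x - v x) * hox
  -- expand both sides
  have hL : (∫ x in (0:ℝ)..1,
        ((v' x - u' x) ^ 2 + σ * (v x - u x) ^ 2 +
          (u'' x * (v x - u x) + u' x * (v' x - u' x)) +
          (z' x * (v x - u x) + z x * (v' x - u' x))))
      = (∫ x in (0:ℝ)..1, (v' x - u' x) ^ 2) +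
          σ * (∫ x in (0:ℝ)..1, (v x - u x) ^ 2) := by
    rw [intervalIntegral.integral_add ((iA.add iB).add iC) iD,
      intervalIntegral.integral_add (iA.add iB) iC,
      intervalIntegral.integral_add iA iB, I1, I2,
      intervalIntegral.integral_const_mul]
    ring
  have hR : (∫ x in (0:ℝ)..1,
        ((v' x + z x) * (v' x - u' x) + (-(f x - σ * v x - z' x)) * (v x - u x)))
      = (∫ x in (0:ℝ)..1, (v' x + z x) * (v' x - u' x)) +
          (∫ x in (0:ℝ)..1, (-(f x - σ * v x - z' x)) * (v x - u x)) :=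
    intervalIntegral.integral_add iP iQ
  -- Cauchy–Schwarz bounds
  have hP : (∫ x in (0:ℝ)..1, (v' x + z x) * (v' x - u' x)) ≤
      Real.sqrt (∫ x in (0:ℝ)..1, (v' x + z x) ^ 2) *
        Real.sqrt (∫ x in (0:ℝ)..1, (v' x - u' x) ^ 2) :=
    cs_int _ _ hpc he'c
  have hQ : (∫ x in (0:ℝ)..1, (-(f x - σ * v x - z' x)) * (v x - u x)) ≤
      Real.sqrt (∫ x in (0:ℝ)..1, (f x - σ * v x - z' x) ^ 2) *
        Real.sqrt (∫ x in (0:ℝ)..1, (v x - u x) ^ 2) := by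
    have := cs_int (fun x => -(f x - σ * v x - z' x)) (fun x => v x - u x) hqc.neg hec
    have hsq : (∫ x in (0:ℝ)..1, (-(f x - σ * v x - z' x)) ^ 2)
        = ∫ x in (0:ℝ)..1, (f x - σ * v x - z' x) ^ 2 := by
      apply intervalIntegral.integral_congr
      intro x _
      ring
    rwa [hsq] at this
  -- key inequality
  have hkey : (∫ x in (0:ℝ)..1, (v' x - u' x) ^ 2) +
      σ * (∫ x in (0:ℝ)..1, (v x - u x) ^ 2) ≤
      Real.sqrt (∫ x in (0:ℝ)..1, (v' x + z x) ^ 2) *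
        Real.sqrt (∫ x in (0:ℝ)..1, (v' x - u' x) ^ 2) +
      Real.sqrt (∫ x in (0:ℝ)..1, (f x - σ * v x - z' x) ^ 2) *
        Real.sqrt (∫ x in (0:ℝ)..1, (v x - u x) ^ 2) := by
    rw [← hL, hsplit, hR]
    linarith [hP, hQ]
  exact final_alg σs σ _ _ _ _ hσs hσ0 hσ
    (intervalIntegral.integral_nonneg h01 (fun x _ => sq_nonneg _))
    (intervalIntegral.integral_nonneg h01 (fun x _ => sq_nonneg _))
    (intervalIntegral.integral_nonneg h01 (fun x _ => sq_nonneg _))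
    (intervalIntegral.integral_nonneg h01 (fun x _ => sq_nonneg _))
    hfried hkey
end

section
/- Let a be continuously differentiable on [0,1] with 0 < μ₁ ≤ a(x) ≤ μ₂ for all x ∈ [0,1], let f be continuous on [0,1], and let σ ≥ 0 and σ* > 0 be real numbers. Let u be twice continuously differentiable on [0,1] with −(a·u')'(x) + σ·u(x) = f(x) on [0,1] and u(0) = u(1) = 0; let v be continuously differentiable on [0,1] with v(0) = v(1) = 0; let z be continuously differentiable on [0,1]. Assume σ*·∫₀¹(v−u)² dx ≤ ∫₀¹ a·((v−u)')² dx. Define Θ = 2σ*/(σ*+σ) and θ = 1/σ* if σ ≤ σ*, and Θ = 1 and θ = 1/σ if σ > σ*. Then ∫₀¹ a·((v−u)')² dx + σ·∫₀¹(v−u)² dx ≤ Θ·( ∫₀¹ a⁻¹·(a·v' + z)² dx + θ·∫₀¹(f − σ·v − z')² dx ). -/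
open Set intervalIntegral

lemma my_ftc01 (F F' : ℝ → ℝ)
    (hF : ∀ x ∈ Icc (0:ℝ) 1, HasDerivWithinAt F (F' x) (Icc 0 1) x)
    (hF' : IntervalIntegrable F' MeasureTheory.volume 0 1) :
    ∫ x in (0:ℝ)..1, F' x = F 1 - F 0 := by
  apply intervalIntegral.integral_eq_sub_of_hasDeriv_right_of_le zero_le_one
    (fun x hx => (hF x hx).continuousWithinAt) _ hF'
  intro x hx
  exact ((hF x (Ioo_subset_Icc_self hx)).hasDerivAt
    (Icc_mem_nhds hx.1 hx.2)).hasDerivWithinAt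

lemma my_cs (g h : ℝ → ℝ) (hg : ContinuousOn g (Icc 0 1))
    (hh : ContinuousOn h (Icc 0 1)) :
    ∫ x in (0:ℝ)..1, g x * h x ≤
      Real.sqrt (∫ x in (0:ℝ)..1, g x ^ 2) * Real.sqrt (∫ x in (0:ℝ)..1, h x ^ 2) := by
  have hIcc : uIcc (0:ℝ) 1 = Icc 0 1 := uIcc_of_le zero_le_one
  have II : ∀ {k : ℝ → ℝ}, ContinuousOn k (Icc 0 1) →
      IntervalIntegrable k MeasureTheory.volume 0 1 :=
    fun hk => ContinuousOn.intervalIntegrable (hIcc ▸ hk)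
  set A := ∫ x in (0:ℝ)..1, g x ^ 2 with hA
  set C := ∫ x in (0:ℝ)..1, h x ^ 2 with hC
  set B := ∫ x in (0:ℝ)..1, g x * h x with hB
  have hAnn : 0 ≤ A := intervalIntegral.integral_nonneg zero_le_one (fun x _ => sq_nonneg _)
  have hCnn : 0 ≤ C := intervalIntegral.integral_nonneg zero_le_one (fun x _ => sq_nonneg _)
  have hquad : ∀ t : ℝ, 0 ≤ C * (t * t) + (2 * B) * t + A := by
    intro t
    have i1 : IntervalIntegrable (fun x => h x ^ 2 * t ^ 2) MeasureTheory.volume 0 1 :=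
      (II (hh.pow 2)).mul_const _
    have i2 : IntervalIntegrable (fun x => g x * h x * (2 * t)) MeasureTheory.volume 0 1 :=
      (II (hg.mul hh)).mul_const _
    have i3 : IntervalIntegrable (fun x => g x ^ 2) MeasureTheory.volume 0 1 := II (hg.pow 2)
    have hnn : 0 ≤ ∫ x in (0:ℝ)..1, (t * h x + g x) ^ 2 :=
      intervalIntegral.integral_nonneg zero_le_one (fun x _ => sq_nonneg _)
    have heq : (∫ x in (0:ℝ)..1, (t * h x + g x) ^ 2)
        = C * t ^ 2 + B * (2 * t) + A := by
      rw [intervalIntegral.integral_congr (g := fun x =>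
        h x ^ 2 * t ^ 2 + g x * h x * (2 * t) + g x ^ 2) (fun x _ => by ring)]
      rw [intervalIntegral.integral_add (i1.add i2) i3,
        intervalIntegral.integral_add i1 i2,
        intervalIntegral.integral_mul_const, intervalIntegral.integral_mul_const]
    rw [heq] at hnn
    nlinarith [hnn]
  have hdisc := discrim_le_zero hquad
  rw [discrim] at hdisc
  have hB2 : B ^ 2 ≤ A * C := by nlinarith
  calc B ≤ |B| := le_abs_self B
    _ = Real.sqrt (B ^ 2) := (Real.sqrt_sq_eq_abs B).symm
    _ ≤ Real.sqrt (A * C) := Real.sqrt_le_sqrt hB2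
    _ = Real.sqrt A * Real.sqrt C := Real.sqrt_mul hAnn _

set_option maxHeartbeats 2000000 in
/-- The paper's main a posteriori error majorant (Theorem 2) for the
one-dimensional diffusion–reaction Dirichlet problem `−(a u')' + σu = f`,
`u(0) = u(1) = 0`, with variable diffusion coefficient `a`, for any `σ ≥ 0`. -/
theorem majorant_1d_variable_coefficient
    (a a' f u u' u'' v v' z z' : ℝ → ℝ) (μ₁ μ₂ σ σs : ℝ)
    (ha' : ∀ x ∈ Icc (0:ℝ) 1, HasDerivWithinAt a (a' x) (Icc 0 1) x)
    (ha'c : ContinuousOn a' (Icc 0 1))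
    (hμ₁ : 0 < μ₁) (hbound : ∀ x ∈ Icc (0:ℝ) 1, μ₁ ≤ a x ∧ a x ≤ μ₂)
    (hf : ContinuousOn f (Icc 0 1))
    (hσ : 0 ≤ σ) (hσs : 0 < σs)
    (hu' : ∀ x ∈ Icc (0:ℝ) 1, HasDerivWithinAt u (u' x) (Icc 0 1) x)
    (hu'' : ∀ x ∈ Icc (0:ℝ) 1, HasDerivWithinAt u' (u'' x) (Icc 0 1) x)
    (hu''c : ContinuousOn u'' (Icc 0 1))
    (hode : ∀ x ∈ Icc (0:ℝ) 1, -(a' x * u' x + a x * u'' x) + σ * u x = f x)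
    (hu0 : u 0 = 0) (hu1 : u 1 = 0)
    (hv' : ∀ x ∈ Icc (0:ℝ) 1, HasDerivWithinAt v (v' x) (Icc 0 1) x)
    (hv'c : ContinuousOn v' (Icc 0 1))
    (hv0 : v 0 = 0) (hv1 : v 1 = 0)
    (hz' : ∀ x ∈ Icc (0:ℝ) 1, HasDerivWithinAt z (z' x) (Icc 0 1) x)
    (hz'c : ContinuousOn z' (Icc 0 1))
    (hfried : σs * ∫ x in (0:ℝ)..1, (v x - u x) ^ 2 ≤
      ∫ x in (0:ℝ)..1, a x * (v' x - u' x) ^ 2) :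
    (∫ x in (0:ℝ)..1, a x * (v' x - u' x) ^ 2) +
        σ * ∫ x in (0:ℝ)..1, (v x - u x) ^ 2 ≤
      (if σ ≤ σs then 2 * σs / (σs + σ) else 1) *
        ((∫ x in (0:ℝ)..1, (a x)⁻¹ * (a x * v' x + z x) ^ 2) +
          (if σ ≤ σs then 1 / σs else 1 / σ) *
            ∫ x in (0:ℝ)..1, (f x - σ * v x - z' x) ^ 2) := by
  have hIcc : uIcc (0:ℝ) 1 = Icc 0 1 := uIcc_of_le zero_le_one
  have II : ∀ {k : ℝ → ℝ}, ContinuousOn k (Icc 0 1) →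
      IntervalIntegrable k MeasureTheory.volume 0 1 :=
    fun hk => ContinuousOn.intervalIntegrable (hIcc ▸ hk)
  -- continuity facts
  have haC : ContinuousOn a (Icc 0 1) := fun x hx => (ha' x hx).continuousWithinAt
  have huC : ContinuousOn u (Icc 0 1) := fun x hx => (hu' x hx).continuousWithinAt
  have hu'C : ContinuousOn u' (Icc 0 1) := fun x hx => (hu'' x hx).continuousWithinAt
  have hvC : ContinuousOn v (Icc 0 1) := fun x hx => (hv' x hx).continuousWithinAt
  have hzC : ContinuousOn z (Icc 0 1) := fun x hx => (hz' x hx).continuousWithinAt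
  have hapos : ∀ x ∈ Icc (0:ℝ) 1, 0 < a x := fun x hx => lt_of_lt_of_le hμ₁ (hbound x hx).1
  have hane : ∀ x ∈ Icc (0:ℝ) 1, a x ≠ 0 := fun x hx => (hapos x hx).ne'
  -- integration by parts identities
  have hD1C : ContinuousOn
      (fun x => (a' x * u' x + a x * u'' x) * (v x - u x) + a x * u' x * (v' x - u' x))
      (Icc 0 1) :=
    (((ha'c.mul hu'C).add (haC.mul hu''c)).mul (hvC.sub huC)).add
      ((haC.mul hu'C).mul (hv'c.sub hu'C))
  have hI1 : ∫ x in (0:ℝ)..1,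
      ((a' x * u' x + a x * u'' x) * (v x - u x) + a x * u' x * (v' x - u' x)) = 0 := by
    rw [my_ftc01 (fun x => a x * u' x * (v x - u x))
      (fun x => (a' x * u' x + a x * u'' x) * (v x - u x) + a x * u' x * (v' x - u' x))
      (fun x hx => ((ha' x hx).mul (hu'' x hx)).mul ((hv' x hx).sub (hu' x hx)))
      (II hD1C)]
    simp [hu0, hu1, hv0, hv1]
  have hD2C : ContinuousOn
      (fun x => z' x * (v x - u x) + z x * (v' x - u' x)) (Icc 0 1) :=
    (hz'c.mul (hvC.sub huC)).add (hzC.mul (hv'c.sub hu'C))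
  have hI2 : ∫ x in (0:ℝ)..1, (z' x * (v x - u x) + z x * (v' x - u' x)) = 0 := by
    rw [my_ftc01 (fun x => z x * (v x - u x)) _
      (fun x hx => (hz' x hx).mul ((hv' x hx).sub (hu' x hx)))
      (II hD2C)]
    simp [hu0, hu1, hv0, hv1]
  -- integrability of the main objects
  have hg1C : ContinuousOn (fun x => (a x * v' x + z x) * (v' x - u' x)) (Icc 0 1) :=
    ((haC.mul hv'c).add hzC).mul (hv'c.sub hu'C)
  have hg2C : ContinuousOn (fun x => (f x - σ * v x - z' x) * (v x - u x)) (Icc 0 1) :=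
    ((hf.sub (continuousOn_const.mul hvC)).sub hz'c).mul (hvC.sub huC)
  have hX2C : ContinuousOn (fun x => a x * (v' x - u' x) ^ 2) (Icc 0 1) :=
    haC.mul ((hv'c.sub hu'C).pow 2)
  have hY2C : ContinuousOn (fun x => (v x - u x) ^ 2) (Icc 0 1) := (hvC.sub huC).pow 2
  -- the key integral identity
  have key : (∫ x in (0:ℝ)..1, (a x * v' x + z x) * (v' x - u' x)) -
      (∫ x in (0:ℝ)..1, (f x - σ * v x - z' x) * (v x - u x)) =
      (∫ x in (0:ℝ)..1, a x * (v' x - u' x) ^ 2) +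
      σ * ∫ x in (0:ℝ)..1, (v x - u x) ^ 2 := by
    have hsplit : (∫ x in (0:ℝ)..1,
        ((a x * v' x + z x) * (v' x - u' x) - (f x - σ * v x - z' x) * (v x - u x)
          - (a x * (v' x - u' x) ^ 2 + σ * (v x - u x) ^ 2))) =
        (∫ x in (0:ℝ)..1,
          (((a' x * u' x + a x * u'' x) * (v x - u x) + a x * u' x * (v' x - u' x))
            + (z' x * (v x - u x) + z x * (v' x - u' x)))) := by
      apply intervalIntegral.integral_congr
      rw [hIcc]
      intro x hx
      have h := hode x hx
      simp only
      linear_combination (v x - u x) * h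
    rw [intervalIntegral.integral_add (II hD1C) (II hD2C), hI1, hI2] at hsplit
    rw [intervalIntegral.integral_sub ((II hg1C).sub (II hg2C))
        ((II hX2C).add ((II hY2C).const_mul σ)),
      intervalIntegral.integral_sub (II hg1C) (II hg2C),
      intervalIntegral.integral_add (II hX2C) ((II hY2C).const_mul σ),
      intervalIntegral.integral_const_mul] at hsplit
    linarith
  -- Cauchy–Schwarz bounds
  set X2 := ∫ x in (0:ℝ)..1, a x * (v' x - u' x) ^ 2 with hX2def
  set Y2 := ∫ x in (0:ℝ)..1, (v x - u x) ^ 2 with hY2def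
  set D := ∫ x in (0:ℝ)..1, (a x)⁻¹ * (a x * v' x + z x) ^ 2 with hDdef
  set R2 := ∫ x in (0:ℝ)..1, (f x - σ * v x - z' x) ^ 2 with hR2def
  have hX2nn : 0 ≤ X2 := intervalIntegral.integral_nonneg zero_le_one
    (fun x hx => mul_nonneg (hapos x hx).le (sq_nonneg _))
  have hY2nn : 0 ≤ Y2 := intervalIntegral.integral_nonneg zero_le_one
    (fun x _ => sq_nonneg _)
  have hDnn : 0 ≤ D := intervalIntegral.integral_nonneg zero_le_one
    (fun x hx => mul_nonneg (inv_nonneg.mpr (hapos x hx).le) (sq_nonneg _))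
  have hR2nn : 0 ≤ R2 := intervalIntegral.integral_nonneg zero_le_one
    (fun x _ => sq_nonneg _)
  -- CS1
  have hsqaC : ContinuousOn (fun x => Real.sqrt (a x)) (Icc 0 1) :=
    Real.continuous_sqrt.comp_continuousOn haC
  have hsqaiC : ContinuousOn (fun x => Real.sqrt ((a x)⁻¹)) (Icc 0 1) :=
    Real.continuous_sqrt.comp_continuousOn (haC.inv₀ hane)
  have cs1 : (∫ x in (0:ℝ)..1, (a x * v' x + z x) * (v' x - u' x)) ≤
      Real.sqrt D * Real.sqrt X2 := by
    have h := my_cs (fun x => Real.sqrt ((a x)⁻¹) * (a x * v' x + z x))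
      (fun x => Real.sqrt (a x) * (v' x - u' x))
      (hsqaiC.mul ((haC.mul hv'c).add hzC)) (hsqaC.mul (hv'c.sub hu'C))
    have e1 : (∫ x in (0:ℝ)..1, (Real.sqrt ((a x)⁻¹) * (a x * v' x + z x)) *
        (Real.sqrt (a x) * (v' x - u' x))) =
        ∫ x in (0:ℝ)..1, (a x * v' x + z x) * (v' x - u' x) := by
      apply intervalIntegral.integral_congr
      rw [hIcc]; intro x hx
      have h1 : Real.sqrt ((a x)⁻¹) * Real.sqrt (a x) = 1 := by
        rw [Real.sqrt_inv]
        exact inv_mul_cancel₀ (ne_of_gt (Real.sqrt_pos.mpr (hapos x hx)))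
      simp only
      calc Real.sqrt ((a x)⁻¹) * (a x * v' x + z x) * (Real.sqrt (a x) * (v' x - u' x))
          = (Real.sqrt ((a x)⁻¹) * Real.sqrt (a x)) *
            ((a x * v' x + z x) * (v' x - u' x)) := by ring
        _ = (a x * v' x + z x) * (v' x - u' x) := by rw [h1, one_mul]
    have e2 : (∫ x in (0:ℝ)..1, (Real.sqrt ((a x)⁻¹) * (a x * v' x + z x)) ^ 2) = D := by
      rw [hDdef]
      apply intervalIntegral.integral_congr
      rw [hIcc]; intro x hx
      simp only
      rw [mul_pow, Real.sq_sqrt (inv_nonneg.mpr (hapos x hx).le)]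
    have e3 : (∫ x in (0:ℝ)..1, (Real.sqrt (a x) * (v' x - u' x)) ^ 2) = X2 := by
      rw [hX2def]
      apply intervalIntegral.integral_congr
      rw [hIcc]; intro x hx
      simp only
      rw [mul_pow, Real.sq_sqrt (hapos x hx).le]
    rw [e1, e2, e3] at h
    exact h
  -- CS2
  have cs2 : -(∫ x in (0:ℝ)..1, (f x - σ * v x - z' x) * (v x - u x)) ≤
      Real.sqrt R2 * Real.sqrt Y2 := by
    have h := my_cs (fun x => -(f x - σ * v x - z' x)) (fun x => v x - u x)
      (((hf.sub (continuousOn_const.mul hvC)).sub hz'c).neg) (hvC.sub huC)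
    have e1 : (∫ x in (0:ℝ)..1, (-(f x - σ * v x - z' x)) * (v x - u x)) =
        -(∫ x in (0:ℝ)..1, (f x - σ * v x - z' x) * (v x - u x)) := by
      rw [← intervalIntegral.integral_neg]
      apply intervalIntegral.integral_congr
      intro x _; simp only; ring
    have e2 : (∫ x in (0:ℝ)..1, (-(f x - σ * v x - z' x)) ^ 2) = R2 := by
      rw [hR2def]
      apply intervalIntegral.integral_congr
      intro x _; simp only; ring
    have e3 : (∫ x in (0:ℝ)..1, (v x - u x) ^ 2) = Y2 := rfl
    rw [e1, e2, e3] at h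
    exact h
  -- main estimate
  set sD := Real.sqrt D with hsD
  set sX := Real.sqrt X2 with hsX
  set sR := Real.sqrt R2 with hsR
  set sY := Real.sqrt Y2 with hsY
  have hsDnn : 0 ≤ sD := Real.sqrt_nonneg _
  have hsXnn : 0 ≤ sX := Real.sqrt_nonneg _
  have hsRnn : 0 ≤ sR := Real.sqrt_nonneg _
  have hsYnn : 0 ≤ sY := Real.sqrt_nonneg _
  have hsD2 : sD ^ 2 = D := Real.sq_sqrt hDnn
  have hsX2 : sX ^ 2 = X2 := Real.sq_sqrt hX2nn
  have hsR2 : sR ^ 2 = R2 := Real.sq_sqrt hR2nn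
  have hsY2 : sY ^ 2 = Y2 := Real.sq_sqrt hY2nn
  have hE : X2 + σ * Y2 ≤ sD * sX + sR * sY := by linarith [key, cs1, cs2]
  clear_value sD sX sR sY
  clear_value X2 Y2 D R2
  clear key cs1 cs2 hsD hsX hsR hsY hX2def hY2def hDdef hR2def
  split_ifs with hcase
  · -- σ ≤ σs
    have hpos : 0 < σs + σ := by linarith
    have hrw : 2 * σs / (σs + σ) * (D + 1 / σs * R2) =
        (2 * σs * D + 2 * R2) / (σs + σ) := by
      field_simp
    rw [hrw, le_div_iff₀ hpos]
    -- goal : (X2 + σ * Y2) * (σs + σ) ≤ 2 * σs * D + 2 * R2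
    have hEnn : (0:ℝ) ≤ X2 + σ * Y2 := add_nonneg hX2nn (mul_nonneg hσ hY2nn)
    rcases eq_or_lt_of_le hEnn with hE0 | hE0
    · nlinarith [hDnn, hR2nn]
    · -- E > 0
      have h1 : σs * (X2 + σ * Y2) ^ 2 ≤ (σs * D + R2) * (X2 + σs * Y2) := by
        have hsq : (X2 + σ * Y2) ^ 2 ≤ (sD * sX + sR * sY) ^ 2 :=
          pow_le_pow_left₀ hEnn hE 2
        have stepA : σs * (sD * sX + sR * sY) ^ 2 ≤
            (σs * sD ^ 2 + sR ^ 2) * (sX ^ 2 + σs * sY ^ 2) := by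
          nlinarith [sq_nonneg (σs * sD * sY - sR * sX), hσs.le]
        calc σs * (X2 + σ * Y2) ^ 2 ≤ σs * (sD * sX + sR * sY) ^ 2 :=
              mul_le_mul_of_nonneg_left hsq hσs.le
          _ ≤ (σs * sD ^ 2 + sR ^ 2) * (sX ^ 2 + σs * sY ^ 2) := stepA
          _ = (σs * D + R2) * (X2 + σs * Y2) := by rw [hsD2, hsX2, hsR2, hsY2]
      have h2 : (σs + σ) * (X2 + σs * Y2) ≤ 2 * σs * (X2 + σ * Y2) := by
        nlinarith [mul_nonneg (sub_nonneg.mpr hcase) (sub_nonneg.mpr hfried)]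
      have hMnn : 0 ≤ σs * D + R2 := add_nonneg (mul_nonneg hσs.le hDnn) hR2nn
      have h3 : σs * ((σs + σ) * (X2 + σ * Y2) ^ 2) ≤
          σs * ((2 * σs * D + 2 * R2) * (X2 + σ * Y2)) := by
        calc σs * ((σs + σ) * (X2 + σ * Y2) ^ 2)
            = (σs + σ) * (σs * (X2 + σ * Y2) ^ 2) := by ring
          _ ≤ (σs + σ) * ((σs * D + R2) * (X2 + σs * Y2)) :=
            mul_le_mul_of_nonneg_left h1 hpos.le
          _ = (σs * D + R2) * ((σs + σ) * (X2 + σs * Y2)) := by ring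
          _ ≤ (σs * D + R2) * (2 * σs * (X2 + σ * Y2)) :=
            mul_le_mul_of_nonneg_left h2 hMnn
          _ = σs * ((2 * σs * D + 2 * R2) * (X2 + σ * Y2)) := by ring
      have h4 : (σs + σ) * (X2 + σ * Y2) ^ 2 ≤ (2 * σs * D + 2 * R2) * (X2 + σ * Y2) :=
        le_of_mul_le_mul_left h3 hσs
      have h5 := le_of_mul_le_mul_right (by nlinarith [h4] :
        ((X2 + σ * Y2) * (σs + σ)) * (X2 + σ * Y2) ≤
          (2 * σs * D + 2 * R2) * (X2 + σ * Y2)) hE0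
      exact h5
  · -- σ > σs
    push_neg at hcase
    have hσpos : 0 < σ := lt_trans hσs hcase
    have hrw : 1 * (D + 1 / σ * R2) = (σ * D + R2) / σ := by
      field_simp
    rw [hrw, le_div_iff₀ hσpos]
    rw [← hsX2, ← hsY2] at hE
    rw [← hsD2, ← hsX2, ← hsR2, ← hsY2]
    nlinarith [mul_le_mul_of_nonneg_left hE hσ,
      mul_nonneg hσ (sq_nonneg (sD - sX)), sq_nonneg (sR - σ * sY)]
end

section
/- Let f be continuous on [0,1], σ > 0, and ψ_D, g₁ real numbers. Let u be twice continuously differentiable on [0,1] with −u''(x) + σ·u(x) = f(x) for all x ∈ [0,1], u(0) = ψ_D and u'(1) = g₁; let v be continuously differentiable on [0,1] with v(0) = ψ_D; let z be continuously differentiable on [0,1] with z(1) = −g₁. Then ∫₀¹((v−u)')² dx + σ·∫₀¹(v−u)² dx ≤ ∫₀¹(v'+z)² dx + (1/σ)·∫₀¹(f − σ·v − z')² dx. -/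
open Set intervalIntegral

/-- Aubin's a posteriori error majorant (Theorem 1) for the one-dimensional
reaction–diffusion problem with mixed boundary conditions `u(0) = ψ_D`,
`u'(1) = g₁`; the test function `z` satisfies the flux condition `z(1) = −g₁`. -/
theorem aubin_majorant_1d_mixed_bc
    (f u u' u'' v v' z z' : ℝ → ℝ) (σ ψD g₁ : ℝ) (hσ : 0 < σ)
    (hf : ContinuousOn f (Icc 0 1))
    (hu' : ∀ x ∈ Icc (0:ℝ) 1, HasDerivWithinAt u (u' x) (Icc 0 1) x)
    (hu'' : ∀ x ∈ Icc (0:ℝ) 1, HasDerivWithinAt u' (u'' x) (Icc 0 1) x)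
    (hu''c : ContinuousOn u'' (Icc 0 1))
    (hode : ∀ x ∈ Icc (0:ℝ) 1, -u'' x + σ * u x = f x)
    (hu0 : u 0 = ψD) (hu1 : u' 1 = g₁)
    (hv' : ∀ x ∈ Icc (0:ℝ) 1, HasDerivWithinAt v (v' x) (Icc 0 1) x)
    (hv'c : ContinuousOn v' (Icc 0 1))
    (hv0 : v 0 = ψD)
    (hz' : ∀ x ∈ Icc (0:ℝ) 1, HasDerivWithinAt z (z' x) (Icc 0 1) x)
    (hz'c : ContinuousOn z' (Icc 0 1))
    (hz1 : z 1 = -g₁) :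
    (∫ x in (0:ℝ)..1, (v' x - u' x) ^ 2) +
        σ * ∫ x in (0:ℝ)..1, (v x - u x) ^ 2 ≤
      (∫ x in (0:ℝ)..1, (v' x + z x) ^ 2) +
        (1 / σ) * ∫ x in (0:ℝ)..1, (f x - σ * v x - z' x) ^ 2 := by
  have h01 : (0:ℝ) ≤ 1 := zero_le_one
  have huIcc : uIcc (0:ℝ) 1 = Icc 0 1 := uIcc_of_le h01
  have hucont : ContinuousOn u (Icc 0 1) := fun x hx => (hu' x hx).continuousWithinAt
  have hu'cont : ContinuousOn u' (Icc 0 1) := fun x hx => (hu'' x hx).continuousWithinAt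
  have hvcont : ContinuousOn v (Icc 0 1) := fun x hx => (hv' x hx).continuousWithinAt
  have hzcont : ContinuousOn z (Icc 0 1) := fun x hx => (hz' x hx).continuousWithinAt
  have hecont : ContinuousOn (fun x => v x - u x) (Icc 0 1) := hvcont.sub hucont
  have he'cont : ContinuousOn (fun x => v' x - u' x) (Icc 0 1) := hv'c.sub hu'cont
  -- w = (u' + z)·(v - u); FTC gives ∫ w' = 0
  have hwderiv : ∀ x ∈ Icc (0:ℝ) 1,
      HasDerivWithinAt (fun x => (u' x + z x) * (v x - u x))
        ((u'' x + z' x) * (v x - u x) + (u' x + z x) * (v' x - u' x)) (Icc 0 1) x :=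
    fun x hx => ((hu'' x hx).add (hz' x hx)).mul ((hv' x hx).sub (hu' x hx))
  have hwcont : ContinuousOn (fun x => (u' x + z x) * (v x - u x)) (Icc 0 1) :=
    fun x hx => (hwderiv x hx).continuousWithinAt
  have hw'cont : ContinuousOn
      (fun x => (u'' x + z' x) * (v x - u x) + (u' x + z x) * (v' x - u' x)) (Icc 0 1) :=
    ((hu''c.add hz'c).mul hecont).add ((hu'cont.add hzcont).mul he'cont)
  have hw'int : IntervalIntegrable
      (fun x => (u'' x + z' x) * (v x - u x) + (u' x + z x) * (v' x - u' x)) MeasureTheory.volume 0 1 := by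
    apply ContinuousOn.intervalIntegrable; rwa [huIcc]
  have hftc : (∫ x in (0:ℝ)..1,
      ((u'' x + z' x) * (v x - u x) + (u' x + z x) * (v' x - u' x))) = 0 := by
    rw [integral_eq_sub_of_hasDeriv_right_of_le h01 hwcont
      (fun x hx => ((hwderiv x (Ioo_subset_Icc_self hx)).hasDerivAt
        (Icc_mem_nhds hx.1 hx.2)).hasDerivWithinAt) hw'int]
    simp [hu1, hz1, hu0, hv0]
  -- integrability of all pieces
  have int1 : IntervalIntegrable (fun x => (v' x - u' x) ^ 2) MeasureTheory.volume 0 1 := by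
    apply ContinuousOn.intervalIntegrable; rw [huIcc]; exact he'cont.pow 2
  have int2 : IntervalIntegrable (fun x => (v x - u x) ^ 2) MeasureTheory.volume 0 1 := by
    apply ContinuousOn.intervalIntegrable; rw [huIcc]; exact hecont.pow 2
  have int3 : IntervalIntegrable (fun x => (v' x + z x) * (v' x - u' x)) MeasureTheory.volume 0 1 := by
    apply ContinuousOn.intervalIntegrable; rw [huIcc]; exact (hv'c.add hzcont).mul he'cont
  have int4 : IntervalIntegrable (fun x => (σ * v x + z' x - f x) * (v x - u x)) MeasureTheory.volume 0 1 := by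
    apply ContinuousOn.intervalIntegrable; rw [huIcc]
    exact (((continuousOn_const.mul hvcont).add hz'c).sub hf).mul hecont
  have int5 : IntervalIntegrable (fun x => (v' x + z x) ^ 2) MeasureTheory.volume 0 1 := by
    apply ContinuousOn.intervalIntegrable; rw [huIcc]; exact (hv'c.add hzcont).pow 2
  have int6 : IntervalIntegrable (fun x => (f x - σ * v x - z' x) ^ 2) MeasureTheory.volume 0 1 := by
    apply ContinuousOn.intervalIntegrable; rw [huIcc]
    exact ((hf.sub (continuousOn_const.mul hvcont)).sub hz'c).pow 2
  -- key identity
  have hkey : (∫ x in (0:ℝ)..1, (v' x - u' x) ^ 2) + σ * (∫ x in (0:ℝ)..1, (v x - u x) ^ 2)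
      = (∫ x in (0:ℝ)..1, (v' x + z x) * (v' x - u' x))
        + ∫ x in (0:ℝ)..1, (σ * v x + z' x - f x) * (v x - u x) := by
    have hzero : (∫ x in (0:ℝ)..1,
        ((v' x - u' x) ^ 2 + σ * (v x - u x) ^ 2
          - ((v' x + z x) * (v' x - u' x) + (σ * v x + z' x - f x) * (v x - u x)))) = 0 := by
      rw [integral_congr (g := fun x =>
        -((u'' x + z' x) * (v x - u x) + (u' x + z x) * (v' x - u' x)))]
      · rw [integral_neg, hftc, neg_zero]
      · intro x hx
        rw [huIcc] at hx
        have h := hode x hx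
        dsimp only
        linear_combination (-(v x - u x)) * h
    have e1 : (∫ x in (0:ℝ)..1,
        ((v' x - u' x) ^ 2 + σ * (v x - u x) ^ 2
          - ((v' x + z x) * (v' x - u' x) + (σ * v x + z' x - f x) * (v x - u x))))
        = ((∫ x in (0:ℝ)..1, (v' x - u' x) ^ 2) + σ * (∫ x in (0:ℝ)..1, (v x - u x) ^ 2))
          - ((∫ x in (0:ℝ)..1, (v' x + z x) * (v' x - u' x))
            + ∫ x in (0:ℝ)..1, (σ * v x + z' x - f x) * (v x - u x)) := by
      rw [integral_sub (int1.add (int2.const_mul σ)) (int3.add int4),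
        integral_add int1 (int2.const_mul σ), integral_const_mul,
        integral_add int3 int4]
    linarith [e1 ▸ hzero]
  -- Young pointwise bounds + integral monotonicity
  have young : ∀ a b c : ℝ, 0 < c → a * b ≤ 1/(2*c) * a^2 + c/2 * b^2 := by
    intro a b c hc
    rw [← sub_nonneg]
    have h : 1/(2*c) * a^2 + c/2 * b^2 - a * b = (1/(2*c)) * (a - c*b)^2 := by
      field_simp; ring
    rw [h]; positivity
  have hm1 : (∫ x in (0:ℝ)..1, (v' x + z x) * (v' x - u' x))
      ≤ ∫ x in (0:ℝ)..1, (1/2 * (v' x + z x) ^ 2 + 1/2 * (v' x - u' x) ^ 2) := by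
    apply integral_mono_on h01 int3 ((int5.const_mul _).add (int1.const_mul _))
    intro x hx
    have := young (v' x + z x) (v' x - u' x) 1 one_pos
    norm_num at this ⊢
    linarith
  have hm2 : (∫ x in (0:ℝ)..1, (σ * v x + z' x - f x) * (v x - u x))
      ≤ ∫ x in (0:ℝ)..1, (1/(2*σ) * (f x - σ * v x - z' x) ^ 2 + σ/2 * (v x - u x) ^ 2) := by
    apply integral_mono_on h01 int4 ((int6.const_mul _).add (int2.const_mul _))
    intro x hx
    have h := young (σ * v x + z' x - f x) (v x - u x) σ hσ
    have heq : (σ * v x + z' x - f x)^2 = (f x - σ * v x - z' x)^2 := by ring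
    rw [heq] at h
    exact h
  have hs1 : (∫ x in (0:ℝ)..1, (1/2 * (v' x + z x) ^ 2 + 1/2 * (v' x - u' x) ^ 2))
      = 1/2 * (∫ x in (0:ℝ)..1, (v' x + z x) ^ 2)
        + 1/2 * (∫ x in (0:ℝ)..1, (v' x - u' x) ^ 2) := by
    rw [integral_add (int5.const_mul _) (int1.const_mul _), integral_const_mul,
      integral_const_mul]
  have hs2 : (∫ x in (0:ℝ)..1, (1/(2*σ) * (f x - σ * v x - z' x) ^ 2 + σ/2 * (v x - u x) ^ 2))
      = 1/(2*σ) * (∫ x in (0:ℝ)..1, (f x - σ * v x - z' x) ^ 2)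
        + σ/2 * (∫ x in (0:ℝ)..1, (v x - u x) ^ 2) := by
    rw [integral_add (int6.const_mul _) (int2.const_mul _), integral_const_mul,
      integral_const_mul]
  rw [hs1] at hm1
  rw [hs2] at hm2
  have hfrac : 2 * (1/(2*σ) * (∫ x in (0:ℝ)..1, (f x - σ * v x - z' x) ^ 2))
      = (1/σ) * (∫ x in (0:ℝ)..1, (f x - σ * v x - z' x) ^ 2) := by
    field_simp
  nlinarith [hkey, hm1, hm2, hfrac]
end

section
/- Let Ω = (0,1)×(0,1) ⊂ ℝ². Let f be continuous on the closed square [0,1]², let u be twice continuously differentiable on [0,1]² with −Δu(x) = f(x) for all x ∈ Ω and u = 0 on ∂Ω; let v be continuously differentiable on [0,1]² with v = 0 on ∂Ω; let z = (z₁,z₂) be a continuously differentiable vector field on [0,1]²; and let β₁, β₂ : [0,1]² → ℝ be bounded measurable functions with β₁(x) + β₂(x) = 1 for all x. For k = 1,2 define R_k(x₁,x₂) = ∫₀^{x_k} (β_k·(f − div z)) evaluated with the k-th coordinate replaced by the integration variable η_k, dη_k. Then (∫_Ω |∇(v−u)|² dx)^{1/2} ≤ (∫_Ω |∇v + z|²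 dx)^{1/2} + Σ_{k=1,2} (∫_Ω R_k² dx)^{1/2}. -/
open Set MeasureTheory intervalIntegral
open scoped NNReal

namespace AKK

noncomputable def Q : Set (ℝ × ℝ) := Icc (0:ℝ) 1 ×ˢ Icc (0:ℝ) 1
noncomputable def S : Set (ℝ × ℝ) := Ioo (0:ℝ) 1 ×ˢ Ioo (0:ℝ) 1

lemma S_subset_Q : S ⊆ Q := prod_mono Ioo_subset_Icc_self Ioo_subset_Icc_self

lemma Q_compact : IsCompact Q := isCompact_Icc.prod isCompact_Icc
lemma Q_closed : IsClosed Q := isClosed_Icc.prod isClosed_Icc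
lemma S_meas : MeasurableSet S := (measurableSet_Ioo.prod measurableSet_Ioo)

/-- fundamental theorem of calculus on a subinterval of `[0,1]`. -/
lemma ftc_slice (w w' : ℝ → ℝ)
    (hw : ∀ t ∈ Icc (0:ℝ) 1, HasDerivWithinAt w (w' t) (Icc 0 1) t)
    (hw'c : ContinuousOn w' (Icc 0 1)) {a b : ℝ} (ha : 0 ≤ a) (hab : a ≤ b) (hb : b ≤ 1) :
    ∫ t in a..b, w' t = w b - w a := by
  have hsub : Icc a b ⊆ Icc (0:ℝ) 1 := Icc_subset_Icc ha hb
  refine integral_eq_sub_of_hasDeriv_right_of_le hab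
    (fun t ht => ((hw t (hsub ht)).continuousWithinAt).mono hsub) (fun t ht => ?_) ?_
  · have htm : t ∈ Icc (0:ℝ) 1 := hsub (Ioo_subset_Icc_self ht)
    have h01 : t ∈ Ioo (0:ℝ) 1 := ⟨lt_of_le_of_lt ha ht.1, lt_of_lt_of_le ht.2 hb⟩
    exact (((hw t htm).hasDerivAt (Icc_mem_nhds h01.1 h01.2)).hasDerivWithinAt)
  · have h : ContinuousOn w' (uIcc a b) := by
      rw [uIcc_of_le hab]; exact hw'c.mono hsub
    exact h.intervalIntegrable


/-- 1D integration by parts on `[0,1]` with vanishing boundary values of `A`. -/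
lemma parts1 (A B A' B' : ℝ → ℝ)
    (hA : ∀ t ∈ Icc (0:ℝ) 1, HasDerivWithinAt A (A' t) (Icc 0 1) t)
    (hB : ∀ t ∈ Icc (0:ℝ) 1, HasDerivWithinAt B (B' t) (Icc 0 1) t)
    (hA'c : ContinuousOn A' (Icc 0 1)) (hB'c : ContinuousOn B' (Icc 0 1))
    (hA0 : A 0 = 0) (hA1 : A 1 = 0) :
    ∫ t in (0:ℝ)..1, A' t * B t = - ∫ t in (0:ℝ)..1, A t * B' t := by
  have hAc : ContinuousOn A (Icc (0:ℝ) 1) := fun t ht => (hA t ht).continuousWithinAt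
  have hBc : ContinuousOn B (Icc (0:ℝ) 1) := fun t ht => (hB t ht).continuousWithinAt
  have hu : uIcc (0:ℝ) 1 = Icc 0 1 := uIcc_of_le zero_le_one
  have hint1 : IntervalIntegrable (fun t => A' t * B t) volume 0 1 := by
    apply ContinuousOn.intervalIntegrable; rw [hu]; exact hA'c.mul hBc
  have hint2 : IntervalIntegrable (fun t => A t * B' t) volume 0 1 := by
    apply ContinuousOn.intervalIntegrable; rw [hu]; exact hAc.mul hB'c
  have hftc : ∫ t in (0:ℝ)..1, (A' t * B t + A t * B' t)
      = A 1 * B 1 - A 0 * B 0 := by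
    refine integral_eq_sub_of_hasDeriv_right_of_le zero_le_one (hAc.mul hBc)
      (fun t ht => ?_) (hint1.add hint2)
    exact ((((hA t (Ioo_subset_Icc_self ht)).mul
      (hB t (Ioo_subset_Icc_self ht))).hasDerivAt
      (Icc_mem_nhds ht.1 ht.2)).hasDerivWithinAt)
  rw [integral_add hint1 hint2, hA0, hA1] at hftc
  linarith

/-- A function with continuous partial derivatives on the closed square is continuous there. -/
lemma contOn_of_partials (A A₁ A₂ : ℝ × ℝ → ℝ)
    (h1 : ∀ p ∈ Q, HasDerivWithinAt (fun t => A (t, p.2)) (A₁ p) (Icc 0 1) p.1)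
    (h2 : ∀ p ∈ Q, HasDerivWithinAt (fun t => A (p.1, t)) (A₂ p) (Icc 0 1) p.2)
    (h1c : ContinuousOn A₁ Q) (h2c : ContinuousOn A₂ Q) : ContinuousOn A Q := by
  obtain ⟨C₁, hC₁⟩ := Q_compact.exists_bound_of_continuousOn h1c
  obtain ⟨C₂, hC₂⟩ := Q_compact.exists_bound_of_continuousOn h2c
  set C : ℝ := max (max C₁ C₂) 0 with hC
  have hC0 : 0 ≤ C := le_max_right _ _
  have key : ∀ p ∈ Q, ∀ q ∈ Q, |A q - A p| ≤ C * |q.1 - p.1| + C * |q.2 - p.2| := by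
    intro p hp q hq
    have hp1 : p.1 ∈ Icc (0:ℝ) 1 := hp.1
    have hp2 : p.2 ∈ Icc (0:ℝ) 1 := hp.2
    have hq1 : q.1 ∈ Icc (0:ℝ) 1 := hq.1
    have hq2 : q.2 ∈ Icc (0:ℝ) 1 := hq.2
    have hCC1 : C₁ ≤ C := le_sup_of_le_left le_sup_left
    have hCC2 : C₂ ≤ C := le_sup_of_le_left le_sup_right
    have step1 : |A (q.1, q.2) - A (p.1, q.2)| ≤ C * |q.1 - p.1| := by
      have := Convex.norm_image_sub_le_of_norm_hasDerivWithin_le (C := C)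
        (f := fun t => A (t, q.2)) (f' := fun t => A₁ (t, q.2)) (s := Icc (0:ℝ) 1)
        (fun t ht => h1 (t, q.2) ⟨ht, hq2⟩)
        (fun t ht => le_trans (hC₁ (t, q.2) ⟨ht, hq2⟩) hCC1) (convex_Icc 0 1) hp1 hq1
      simpa [Real.norm_eq_abs] using this
    have step2 : |A (p.1, q.2) - A (p.1, p.2)| ≤ C * |q.2 - p.2| := by
      have := Convex.norm_image_sub_le_of_norm_hasDerivWithin_le (C := C)
        (f := fun t => A (p.1, t)) (f' := fun t => A₂ (p.1, t)) (s := Icc (0:ℝ) 1)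
        (fun t ht => h2 (p.1, t) ⟨hp1, ht⟩)
        (fun t ht => le_trans (hC₂ (p.1, t) ⟨hp1, ht⟩) hCC2) (convex_Icc 0 1) hp2 hq2
      simpa [Real.norm_eq_abs] using this
    have hqe : A q = A (q.1, q.2) := rfl
    have hpe : A p = A (p.1, p.2) := rfl
    calc |A q - A p| = |(A (q.1, q.2) - A (p.1, q.2)) + (A (p.1, q.2) - A (p.1, p.2))| := by
          rw [hqe, hpe]; congr 1; ring
    _ ≤ |A (q.1, q.2) - A (p.1, q.2)| + |A (p.1, q.2) - A (p.1, p.2)| := abs_add_le _ _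
    _ ≤ C * |q.1 - p.1| + C * |q.2 - p.2| := add_le_add step1 step2
  have hlip : LipschitzOnWith (Real.toNNReal (2 * C)) A Q := by
    refine LipschitzOnWith.of_dist_le_mul fun x hx y hy => ?_
    have h := key y hy x hx
    have hd1 : |x.1 - y.1| ≤ dist x y := by
      rw [Prod.dist_eq]; exact le_trans (le_of_eq (Real.dist_eq _ _).symm) (le_max_left _ _)
    have hd2 : |x.2 - y.2| ≤ dist x y := by
      rw [Prod.dist_eq]; exact le_trans (le_of_eq (Real.dist_eq _ _).symm) (le_max_right _ _)
    have hco : ((Real.toNNReal (2 * C) : ℝ≥0) : ℝ) = 2 * C :=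
      Real.coe_toNNReal _ (by linarith)
    rw [Real.dist_eq, hco]
    have := mul_le_mul_of_nonneg_left hd1 hC0
    have := mul_le_mul_of_nonneg_left hd2 hC0
    linarith
  exact hlip.continuousOn

/-- Fubini on the open unit square, `x` outer. -/
lemma fub_xy (F : ℝ × ℝ → ℝ) (hF : IntegrableOn F S) :
    ∫ p in S, F p = ∫ x in Ioo (0:ℝ) 1, ∫ y in Ioo (0:ℝ) 1, F (x, y) := by
  unfold S at hF ⊢
  rw [Measure.volume_eq_prod] at hF ⊢
  exact setIntegral_prod F hF

/-- Fubini on the open unit square, `y` outer. -/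
lemma fub_yx (F : ℝ × ℝ → ℝ) (hF : IntegrableOn F S) :
    ∫ p in S, F p = ∫ y in Ioo (0:ℝ) 1, ∫ x in Ioo (0:ℝ) 1, F (x, y) := by
  rw [fub_xy F hF]
  have hint : Integrable (Function.uncurry fun x y => F (x, y))
      ((volume.restrict (Ioo (0:ℝ) 1)).prod (volume.restrict (Ioo (0:ℝ) 1))) := by
    rw [Measure.prod_restrict, ← Measure.volume_eq_prod]
    exact hF
  exact integral_integral_swap hint


lemma measurable_indicator_of_continuousOn {α : Type*} [TopologicalSpace α] [MeasurableSpace α]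
    [BorelSpace α] {s : Set α} (hs : IsClosed s) {φ : α → ℝ}
    (hφ : ContinuousOn φ s) : Measurable (s.indicator φ) := by
  have hemb : MeasurableEmbedding ((↑) : s → α) :=
    hs.isClosedEmbedding_subtypeVal.measurableEmbedding
  have hg : Measurable (fun x : s => φ x) := (hφ.restrict).measurable
  have h := hemb.measurable_extend hg (measurable_const (a := (0:ℝ)))
  convert h using 1
  funext x
  by_cases hx : x ∈ s
  · have : Function.extend ((↑) : s → α) (fun x : s => φ x) (fun _ => 0) ((⟨x, hx⟩ : s) : α)
        = φ x := Subtype.val_injective.extend_apply _ _ _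
    simpa [Set.indicator_of_mem hx] using this.symm
  · rw [Set.indicator_of_notMem hx, Function.extend_apply']
    rintro ⟨a, rfl⟩
    exact hx a.2

/-- 1D integration by parts where one factor is the antiderivative of a bounded
measurable function. -/
lemma parts2 (w w' G : ℝ → ℝ)
    (hw : ∀ t ∈ Icc (0:ℝ) 1, HasDerivWithinAt w (w' t) (Icc 0 1) t)
    (hw'c : ContinuousOn w' (Icc 0 1))
    (hw0 : w 0 = 0) (hw1 : w 1 = 0)
    (hG : Measurable G) {C : ℝ} (hGb : ∀ t, |G t| ≤ C) :
    ∫ t in (0:ℝ)..1, w' t * (∫ η in (0:ℝ)..t, G η) = - ∫ t in (0:ℝ)..1, w t * G t := by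
  set W' : ℝ → ℝ := (Icc (0:ℝ) 1).indicator w' with hW'
  have hW'm : Measurable W' := measurable_indicator_of_continuousOn isClosed_Icc hw'c
  obtain ⟨Cw, hCw⟩ := isCompact_Icc.exists_bound_of_continuousOn hw'c
  have hCw0 : 0 ≤ max Cw 0 := le_max_right _ _
  have hW'b : ∀ t, |W' t| ≤ max Cw 0 := by
    intro t
    by_cases ht : t ∈ Icc (0:ℝ) 1
    · rw [hW', Set.indicator_of_mem ht]
      exact le_trans (hCw t ht) (le_max_left _ _)
    · rw [hW', Set.indicator_of_notMem ht]; simpa using hCw0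
  have hC0 : 0 ≤ C := le_trans (abs_nonneg _) (hGb 0)
  set μ : Measure ℝ := volume.restrict (Ioc (0:ℝ) 1) with hμ
  haveI : IsFiniteMeasure μ := by
    constructor
    rw [hμ, Measure.restrict_apply_univ, Real.volume_Ioc]
    norm_num
  -- step 1: rewrite as a double integral over Ioc 0 1
  have step1 : ∫ t in (0:ℝ)..1, w' t * (∫ η in (0:ℝ)..t, G η)
      = ∫ t, (∫ η, W' t * (Iic t).indicator G η ∂μ) ∂μ := by
    rw [intervalIntegral.integral_of_le zero_le_one]
    refine setIntegral_congr_fun measurableSet_Ioc (fun t ht => ?_)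
    have h1 : w' t = W' t := (Set.indicator_of_mem (Ioc_subset_Icc_self ht) w').symm
    have h2 : ∫ η in (0:ℝ)..t, G η = ∫ η, (Iic t).indicator G η ∂μ := by
      rw [intervalIntegral.integral_of_le ht.1.le, hμ,
        setIntegral_indicator measurableSet_Iic, Set.Ioc_inter_Iic, min_eq_right ht.2]
    rw [h1, h2, ← MeasureTheory.integral_const_mul]
  -- step 2: swap the two integrals
  have hind : Measurable (fun z : ℝ × ℝ => (Iic z.1).indicator G z.2) := by
    have heq : (fun z : ℝ × ℝ => (Iic z.1).indicator G z.2)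
        = {z : ℝ × ℝ | z.2 ≤ z.1}.indicator (fun z => G z.2) := by
      funext z
      by_cases h : z.2 ≤ z.1 <;> simp [Set.indicator_apply, h]
    rw [heq]
    exact (hG.comp measurable_snd).indicator
      ((isClosed_le continuous_snd continuous_fst).measurableSet)
  have hintg : Integrable (Function.uncurry fun t η => W' t * (Iic t).indicator G η)
      (μ.prod μ) := by
    refine Integrable.mono' (g := fun _ => (max Cw 0) * C)
      (integrable_const _) ?_ (Filter.Eventually.of_forall fun z => ?_)
    · exact ((hW'm.comp measurable_fst).mul hind).aestronglyMeasurable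
    · have h1 : |W' z.1| ≤ max Cw 0 := hW'b _
      have h2 : |(Iic z.1).indicator G z.2| ≤ C := by
        by_cases h : z.2 ∈ Iic z.1
        · rw [Set.indicator_of_mem h]; exact hGb _
        · rw [Set.indicator_of_notMem h]; simpa using hC0
      calc ‖W' z.1 * (Iic z.1).indicator G z.2‖
          = |W' z.1| * |(Iic z.1).indicator G z.2| := by rw [Real.norm_eq_abs, abs_mul]
      _ ≤ (max Cw 0) * C := mul_le_mul h1 h2 (abs_nonneg _) hCw0
  have step2 : ∫ t, (∫ η, W' t * (Iic t).indicator G η ∂μ) ∂μ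
      = ∫ η, (∫ t, W' t * (Iic t).indicator G η ∂μ) ∂μ :=
    integral_integral_swap hintg
  -- step 3: compute the inner integral
  have step3 : ∫ η, (∫ t, W' t * (Iic t).indicator G η ∂μ) ∂μ
      = ∫ η, -(w η * G η) ∂μ := by
    rw [hμ]
    refine setIntegral_congr_fun measurableSet_Ioc (fun η hη => ?_)
    have heq : (fun t => W' t * (Iic t).indicator G η)
        = (Ici η).indicator (fun t => W' t * G η) := by
      funext t
      by_cases h : η ≤ t <;> simp [Set.indicator_apply, h]
    have hset : Ioc (0:ℝ) 1 ∩ Ici η = Icc η 1 := by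
      ext t
      simp only [mem_inter_iff, mem_Ioc, mem_Ici, mem_Icc]
      constructor
      · rintro ⟨⟨_, ht1⟩, htη⟩; exact ⟨htη, ht1⟩
      · rintro ⟨h1, h2⟩; exact ⟨⟨lt_of_lt_of_le hη.1 h1, h2⟩, h1⟩
    have hWw : ∫ t in Icc η 1, W' t = ∫ t in Icc η 1, w' t := by
      refine setIntegral_congr_fun measurableSet_Icc (fun t ht => ?_)
      exact Set.indicator_of_mem (mem_Icc.mpr ⟨le_trans hη.1.le (mem_Icc.mp ht).1, (mem_Icc.mp ht).2⟩) w'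
    have hftc : ∫ t in Icc η 1, w' t = w 1 - w η := by
      rw [integral_Icc_eq_integral_Ioc, ← intervalIntegral.integral_of_le hη.2]
      exact ftc_slice w w' hw hw'c hη.1.le hη.2 le_rfl
    rw [heq, setIntegral_indicator measurableSet_Ici, hset,
      MeasureTheory.integral_mul_const, hWw, hftc, hw1]
    ring
  rw [step1, step2, step3, hμ, MeasureTheory.integral_neg,
    intervalIntegral.integral_of_le zero_le_one]


lemma Q_meas : MeasurableSet Q := (measurableSet_Icc.prod measurableSet_Icc)

lemma intS {F : ℝ × ℝ → ℝ} (h : ContinuousOn F Q) : IntegrableOn F S :=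
  (h.integrableOn_compact Q_compact).mono_set S_subset_Q

lemma sliceCont_x {F : ℝ × ℝ → ℝ} (hc : ContinuousOn F Q) {y : ℝ} (hy : y ∈ Icc (0:ℝ) 1) :
    ContinuousOn (fun t => F (t, y)) (Icc (0:ℝ) 1) :=
  hc.comp ((continuous_id.prodMk continuous_const).continuousOn) (fun t ht => ⟨ht, hy⟩)

lemma sliceCont_y {F : ℝ × ℝ → ℝ} (hc : ContinuousOn F Q) {x : ℝ} (hx : x ∈ Icc (0:ℝ) 1) :
    ContinuousOn (fun t => F (x, t)) (Icc (0:ℝ) 1) :=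
  hc.comp ((continuous_const.prodMk continuous_id).continuousOn) (fun t ht => ⟨hx, ht⟩)

/-- 2D integration by parts in the first variable. -/
lemma parts_x (A B A' B' : ℝ × ℝ → ℝ)
    (hAd : ∀ p ∈ Q, HasDerivWithinAt (fun t => A (t, p.2)) (A' p) (Icc 0 1) p.1)
    (hBd : ∀ p ∈ Q, HasDerivWithinAt (fun t => B (t, p.2)) (B' p) (Icc 0 1) p.1)
    (hAc : ContinuousOn A Q) (hBc : ContinuousOn B Q)
    (hA'c : ContinuousOn A' Q) (hB'c : ContinuousOn B' Q)
    (hA0 : ∀ y ∈ Icc (0:ℝ) 1, A (0, y) = 0) (hA1 : ∀ y ∈ Icc (0:ℝ) 1, A (1, y) = 0) :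
    ∫ p in S, A' p * B p = - ∫ p in S, A p * B' p := by
  have h1 : IntegrableOn (fun p => A' p * B p) S := intS (hA'c.mul hBc)
  have h2 : IntegrableOn (fun p => A p * B' p) S := intS (hAc.mul hB'c)
  rw [fub_yx _ h1, fub_yx _ h2, ← MeasureTheory.integral_neg]
  refine setIntegral_congr_fun measurableSet_Ioo (fun y hy => ?_)
  have hy' : y ∈ Icc (0:ℝ) 1 := Ioo_subset_Icc_self hy
  have key : ∫ t in (0:ℝ)..1, A' (t, y) * B (t, y) = - ∫ t in (0:ℝ)..1, A (t, y) * B' (t, y) :=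
    parts1 (fun t => A (t, y)) (fun t => B (t, y)) (fun t => A' (t, y)) (fun t => B' (t, y))
      (fun t ht => hAd (t, y) ⟨ht, hy'⟩) (fun t ht => hBd (t, y) ⟨ht, hy'⟩)
      (sliceCont_x hA'c hy') (sliceCont_x hB'c hy') (hA0 y hy') (hA1 y hy')
  rw [intervalIntegral.integral_of_le zero_le_one, integral_Ioc_eq_integral_Ioo] at key
  rw [intervalIntegral.integral_of_le zero_le_one, integral_Ioc_eq_integral_Ioo] at key
  exact key

/-- 2D integration by parts in the second variable. -/
lemma parts_y (A B A' B' : ℝ × ℝ → ℝ)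
    (hAd : ∀ p ∈ Q, HasDerivWithinAt (fun t => A (p.1, t)) (A' p) (Icc 0 1) p.2)
    (hBd : ∀ p ∈ Q, HasDerivWithinAt (fun t => B (p.1, t)) (B' p) (Icc 0 1) p.2)
    (hAc : ContinuousOn A Q) (hBc : ContinuousOn B Q)
    (hA'c : ContinuousOn A' Q) (hB'c : ContinuousOn B' Q)
    (hA0 : ∀ x ∈ Icc (0:ℝ) 1, A (x, 0) = 0) (hA1 : ∀ x ∈ Icc (0:ℝ) 1, A (x, 1) = 0) :
    ∫ p in S, A' p * B p = - ∫ p in S, A p * B' p := by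
  have h1 : IntegrableOn (fun p => A' p * B p) S := intS (hA'c.mul hBc)
  have h2 : IntegrableOn (fun p => A p * B' p) S := intS (hAc.mul hB'c)
  rw [fub_xy _ h1, fub_xy _ h2, ← MeasureTheory.integral_neg]
  refine setIntegral_congr_fun measurableSet_Ioo (fun x hx => ?_)
  have hx' : x ∈ Icc (0:ℝ) 1 := Ioo_subset_Icc_self hx
  have key : ∫ t in (0:ℝ)..1, A' (x, t) * B (x, t) = - ∫ t in (0:ℝ)..1, A (x, t) * B' (x, t) :=
    parts1 (fun t => A (x, t)) (fun t => B (x, t)) (fun t => A' (x, t)) (fun t => B' (x, t))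
      (fun t ht => hAd (x, t) ⟨hx', ht⟩) (fun t ht => hBd (x, t) ⟨hx', ht⟩)
      (sliceCont_y hA'c hx') (sliceCont_y hB'c hx') (hA0 x hx') (hA1 x hx')
  rw [intervalIntegral.integral_of_le zero_le_one, integral_Ioc_eq_integral_Ioo] at key
  rw [intervalIntegral.integral_of_le zero_le_one, integral_Ioc_eq_integral_Ioo] at key
  exact key

/-- 2D residual integration by parts in the first variable. -/
lemma parts2_x (w w' g Rg : ℝ × ℝ → ℝ)
    (hwd : ∀ p ∈ Q, HasDerivWithinAt (fun t => w (t, p.2)) (w' p) (Icc 0 1) p.1)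
    (hw'c : ContinuousOn w' Q)
    (hw0 : ∀ y ∈ Icc (0:ℝ) 1, w (0, y) = 0) (hw1 : ∀ y ∈ Icc (0:ℝ) 1, w (1, y) = 0)
    (hg : Measurable g) {C : ℝ} (hgb : ∀ p, |g p| ≤ C)
    (hRg : ∀ p : ℝ × ℝ, p.2 ∈ Icc (0:ℝ) 1 → Rg p = ∫ η in (0:ℝ)..p.1, g (η, p.2))
    (h1 : IntegrableOn (fun p => w' p * Rg p) S)
    (h2 : IntegrableOn (fun p => w p * g p) S) :
    ∫ p in S, w' p * Rg p = - ∫ p in S, w p * g p := by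
  rw [fub_yx _ h1, fub_yx _ h2, ← MeasureTheory.integral_neg]
  refine setIntegral_congr_fun measurableSet_Ioo (fun y hy => ?_)
  have hy' : y ∈ Icc (0:ℝ) 1 := Ioo_subset_Icc_self hy
  have key : ∫ t in (0:ℝ)..1, w' (t, y) * (∫ η in (0:ℝ)..t, g (η, y))
      = - ∫ t in (0:ℝ)..1, w (t, y) * g (t, y) :=
    parts2 (fun t => w (t, y)) (fun t => w' (t, y)) (fun η => g (η, y))
      (fun t ht => hwd (t, y) ⟨ht, hy'⟩) (sliceCont_x hw'c hy') (hw0 y hy') (hw1 y hy')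
      (hg.comp (measurable_id.prodMk measurable_const)) (fun η => hgb (η, y))
  rw [intervalIntegral.integral_of_le zero_le_one, integral_Ioc_eq_integral_Ioo] at key
  rw [intervalIntegral.integral_of_le zero_le_one, integral_Ioc_eq_integral_Ioo] at key
  calc ∫ x in Ioo (0:ℝ) 1, w' (x, y) * Rg (x, y)
      = ∫ x in Ioo (0:ℝ) 1, w' (x, y) * (∫ η in (0:ℝ)..x, g (η, y)) :=
        setIntegral_congr_fun measurableSet_Ioo (fun x _ => by rw [hRg (x, y) hy'])
  _ = - ∫ x in Ioo (0:ℝ) 1, w (x, y) * g (x, y) := key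

/-- 2D residual integration by parts in the second variable. -/
lemma parts2_y (w w' g Rg : ℝ × ℝ → ℝ)
    (hwd : ∀ p ∈ Q, HasDerivWithinAt (fun t => w (p.1, t)) (w' p) (Icc 0 1) p.2)
    (hw'c : ContinuousOn w' Q)
    (hw0 : ∀ x ∈ Icc (0:ℝ) 1, w (x, 0) = 0) (hw1 : ∀ x ∈ Icc (0:ℝ) 1, w (x, 1) = 0)
    (hg : Measurable g) {C : ℝ} (hgb : ∀ p, |g p| ≤ C)
    (hRg : ∀ p : ℝ × ℝ, p.1 ∈ Icc (0:ℝ) 1 → Rg p = ∫ η in (0:ℝ)..p.2, g (p.1, η))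
    (h1 : IntegrableOn (fun p => w' p * Rg p) S)
    (h2 : IntegrableOn (fun p => w p * g p) S) :
    ∫ p in S, w' p * Rg p = - ∫ p in S, w p * g p := by
  rw [fub_xy _ h1, fub_xy _ h2, ← MeasureTheory.integral_neg]
  refine setIntegral_congr_fun measurableSet_Ioo (fun x hx => ?_)
  have hx' : x ∈ Icc (0:ℝ) 1 := Ioo_subset_Icc_self hx
  have key : ∫ t in (0:ℝ)..1, w' (x, t) * (∫ η in (0:ℝ)..t, g (x, η))
      = - ∫ t in (0:ℝ)..1, w (x, t) * g (x, t) :=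
    parts2 (fun t => w (x, t)) (fun t => w' (x, t)) (fun η => g (x, η))
      (fun t ht => hwd (x, t) ⟨hx', ht⟩) (sliceCont_y hw'c hx') (hw0 x hx') (hw1 x hx')
      (hg.comp (measurable_const.prodMk measurable_id)) (fun η => hgb (x, η))
  rw [intervalIntegral.integral_of_le zero_le_one, integral_Ioc_eq_integral_Ioo] at key
  rw [intervalIntegral.integral_of_le zero_le_one, integral_Ioc_eq_integral_Ioo] at key
  calc ∫ t in Ioo (0:ℝ) 1, w' (x, t) * Rg (x, t)
      = ∫ t in Ioo (0:ℝ) 1, w' (x, t) * (∫ η in (0:ℝ)..t, g (x, η)) :=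
        setIntegral_congr_fun measurableSet_Ioo (fun t _ => by rw [hRg (x, t) hx'])
  _ = - ∫ t in Ioo (0:ℝ) 1, w (x, t) * g (x, t) := key

/-- measurability of the parametric partial antiderivative -/
lemma measurable_rho (g : ℝ × ℝ → ℝ) (hg : Measurable g) :
    Measurable fun p : ℝ × ℝ => ∫ η in (0:ℝ)..p.1, g (η, p.2) := by
  have main : ∀ c : ℝ, Measurable fun p : ℝ × ℝ => ∫ η in Ioc c p.1, g (η, p.2) := by
    intro c
    have hF : Measurable fun z : (ℝ × ℝ) × ℝ => (Ioc c z.1.1).indicator (fun η => g (η, z.1.2)) z.2 := by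
      have heq : (fun z : (ℝ × ℝ) × ℝ => (Ioc c z.1.1).indicator (fun η => g (η, z.1.2)) z.2)
          = {z : (ℝ × ℝ) × ℝ | c < z.2 ∧ z.2 ≤ z.1.1}.indicator (fun z => g (z.2, z.1.2)) := by
        funext z
        by_cases h : c < z.2 ∧ z.2 ≤ z.1.1 <;> simp [Set.indicator_apply, Set.mem_Ioc, h]
      rw [heq]
      refine (hg.comp (measurable_snd.prodMk measurable_fst.snd)).indicator ?_
      rw [Set.setOf_and]
      exact ((isOpen_lt continuous_const continuous_snd).measurableSet).inter
        ((isClosed_le continuous_snd continuous_fst.fst).measurableSet)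
    have hsm := hF.stronglyMeasurable.integral_prod_right' (ν := volume)
    have : (fun p : ℝ × ℝ => ∫ η in Ioc c p.1, g (η, p.2))
        = fun p : ℝ × ℝ => ∫ η, (Ioc c p.1).indicator (fun η => g (η, p.2)) η := by
      funext p
      rw [MeasureTheory.integral_indicator measurableSet_Ioc]
    rw [this]
    exact hsm.measurable
  have main2 : Measurable fun p : ℝ × ℝ => ∫ η in Ioc p.1 (0:ℝ), g (η, p.2) := by
    have hF : Measurable fun z : (ℝ × ℝ) × ℝ => (Ioc z.1.1 (0:ℝ)).indicator (fun η => g (η, z.1.2)) z.2 := by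
      have heq : (fun z : (ℝ × ℝ) × ℝ => (Ioc z.1.1 (0:ℝ)).indicator (fun η => g (η, z.1.2)) z.2)
          = {z : (ℝ × ℝ) × ℝ | z.1.1 < z.2 ∧ z.2 ≤ 0}.indicator (fun z => g (z.2, z.1.2)) := by
        funext z
        by_cases h : z.1.1 < z.2 ∧ z.2 ≤ 0 <;> simp [Set.indicator_apply, Set.mem_Ioc, h]
      rw [heq]
      refine (hg.comp (measurable_snd.prodMk measurable_fst.snd)).indicator ?_
      rw [Set.setOf_and]
      exact ((isOpen_lt continuous_fst.fst continuous_snd).measurableSet).inter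
        ((isClosed_le continuous_snd continuous_const).measurableSet)
    have hsm := hF.stronglyMeasurable.integral_prod_right' (ν := volume)
    have : (fun p : ℝ × ℝ => ∫ η in Ioc p.1 (0:ℝ), g (η, p.2))
        = fun p : ℝ × ℝ => ∫ η, (Ioc p.1 (0:ℝ)).indicator (fun η => g (η, p.2)) η := by
      funext p
      rw [MeasureTheory.integral_indicator measurableSet_Ioc]
    rw [this]
    exact hsm.measurable
  have : (fun p : ℝ × ℝ => ∫ η in (0:ℝ)..p.1, g (η, p.2))
      = fun p : ℝ × ℝ => (∫ η in Ioc (0:ℝ) p.1, g (η, p.2)) - ∫ η in Ioc p.1 (0:ℝ), g (η, p.2) := by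
    funext p
    rfl
  rw [this]
  exact (main 0).sub main2


/-- Cauchy–Schwarz for real integrals. -/
lemma integral_mul_le_sqrt_mul_sqrt {α : Type*} [MeasurableSpace α] (μ : Measure α)
    (a b : α → ℝ) (ha : Integrable (fun x => a x ^ 2) μ) (hb : Integrable (fun x => b x ^ 2) μ)
    (hab : Integrable (fun x => a x * b x) μ) :
    ∫ x, a x * b x ∂μ ≤ Real.sqrt (∫ x, a x ^ 2 ∂μ) * Real.sqrt (∫ x, b x ^ 2 ∂μ) := by
  set X := ∫ x, a x ^ 2 ∂μ with hX
  set Y := ∫ x, b x ^ 2 ∂μ with hY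
  set P := ∫ x, a x * b x ∂μ with hP
  have hX0 : 0 ≤ X := integral_nonneg fun x => sq_nonneg _
  have hY0 : 0 ≤ Y := integral_nonneg fun x => sq_nonneg _
  have key : ∀ l : ℝ, 0 ≤ l ^ 2 * X + 2 * l * P + Y := by
    intro l
    have h1 : 0 ≤ ∫ x, (l * a x + b x) ^ 2 ∂μ := integral_nonneg fun x => sq_nonneg _
    have heq : (fun x => (l * a x + b x) ^ 2)
        = fun x => (l ^ 2 * a x ^ 2 + 2 * l * (a x * b x)) + b x ^ 2 := by
      funext x; ring
    have hI1 : Integrable (fun x => l ^ 2 * a x ^ 2 + 2 * l * (a x * b x)) μ :=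
      (ha.const_mul _).add (hab.const_mul _)
    have h2 : ∫ x, (l * a x + b x) ^ 2 ∂μ = l ^ 2 * X + 2 * l * P + Y := by
      rw [heq, integral_add hI1 hb, integral_add (ha.const_mul _) (hab.const_mul _),
        MeasureTheory.integral_const_mul, MeasureTheory.integral_const_mul]
    linarith [h2 ▸ h1]
  have hP2 : P ^ 2 ≤ X * Y := by
    rcases eq_or_lt_of_le hX0 with h0 | h0
    · have hPz : P = 0 := by
        by_contra hne
        have hk := key (-(Y + 1) / (2 * P))
        rw [← h0] at hk
        have h2 : 2 * (-(Y + 1) / (2 * P)) * P = -(Y + 1) := by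
          field_simp
        rw [mul_zero, zero_add, h2] at hk
        linarith
      rw [hPz, ← h0]
      simpa using mul_nonneg (le_of_eq rfl) hY0
    · have hk := key (-P / X)
      have hXne : X ≠ 0 := ne_of_gt h0
      have h3 : (-P / X) ^ 2 * X + 2 * (-P / X) * P + Y = -(P ^ 2) / X + Y := by
        field_simp; ring
      rw [h3, neg_div] at hk
      have h4 : P ^ 2 / X ≤ Y := by linarith
      have := (div_le_iff₀ h0).mp h4
      linarith [this]
  calc P ≤ |P| := le_abs_self _
  _ = Real.sqrt (P ^ 2) := (Real.sqrt_sq_eq_abs P).symm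
  _ ≤ Real.sqrt (X * Y) := Real.sqrt_le_sqrt hP2
  _ = Real.sqrt X * Real.sqrt Y := Real.sqrt_mul hX0 _


lemma measurable_rho' (g : ℝ × ℝ → ℝ) (hg : Measurable g) :
    Measurable fun p : ℝ × ℝ => ∫ η in (0:ℝ)..p.2, g (p.1, η) := by
  have h0 : Measurable fun q : ℝ × ℝ => g (q.2, q.1) :=
    hg.comp (measurable_snd.prodMk measurable_fst)
  have h1 := (measurable_rho _ h0).comp
    (measurable_snd.prodMk measurable_fst : Measurable fun p : ℝ × ℝ => (p.2, p.1))
  have heq : (fun p : ℝ × ℝ => ∫ η in (0:ℝ)..p.2, g (p.1, η))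
      = ((fun p : ℝ × ℝ => ∫ η in (0:ℝ)..p.1, (fun q : ℝ × ℝ => g (q.2, q.1)) (η, p.2))
          ∘ (fun p : ℝ × ℝ => (p.2, p.1))) := by
    funext p
    simp
  rw [heq]
  exact h1

lemma ptCS (a b c d : ℝ) : a*c + b*d ≤ Real.sqrt (a^2+b^2) * Real.sqrt (c^2+d^2) := by
  have h1 : (a*c+b*d)^2 ≤ (a^2+b^2)*(c^2+d^2) := by nlinarith [sq_nonneg (a*d - b*c)]
  calc a*c+b*d ≤ |a*c+b*d| := le_abs_self _
  _ = Real.sqrt ((a*c+b*d)^2) := (Real.sqrt_sq_eq_abs _).symm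
  _ ≤ Real.sqrt ((a^2+b^2)*(c^2+d^2)) := Real.sqrt_le_sqrt h1
  _ = _ := Real.sqrt_mul (by positivity) _

lemma volS_fin : volume S < ⊤ := by
  unfold S
  rw [Measure.volume_eq_prod, Measure.prod_prod, Real.volume_Ioo]
  simp

instance : IsFiniteMeasure (volume.restrict S) :=
  ⟨by rw [Measure.restrict_apply_univ]; exact volS_fin⟩

lemma aesmS {F : ℝ × ℝ → ℝ} (h : ContinuousOn F Q) :
    AEStronglyMeasurable F (volume.restrict S) :=
  ((h.aemeasurable Q_meas).mono_measure
    (Measure.restrict_mono S_subset_Q le_rfl)).aestronglyMeasurable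

lemma intS_bdd {F : ℝ × ℝ → ℝ} (hm : AEStronglyMeasurable F (volume.restrict S)) {C : ℝ}
    (hb : ∀ p ∈ S, |F p| ≤ C) : IntegrableOn F S := by
  refine Integrable.mono' (g := fun _ => C) (integrable_const _) hm ?_
  rw [ae_restrict_iff' S_meas]
  exact Filter.Eventually.of_forall fun p hp => by rw [Real.norm_eq_abs]; exact hb p hp

end AKK

set_option maxHeartbeats 1000000

/-- The majorant (1.6) of Anufriev–Korneev–Kostylev for the homogeneous
Dirichlet problem for Poisson's equation on the unit square: the residual
`f − div z` enters only through its partial antiderivatives `R₁, R₂` weighted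
by an arbitrary partition `β₁ + β₂ ≡ 1`. Partial derivatives are supplied as
explicit functions: `u₁, u₂` are the first partials of `u`, `u₁₁, u₂₂` its pure
second partials, `v₁, v₂` the partials of `v`, and `dz₁ = ∂z₁/∂x₁`,
`dz₂ = ∂z₂/∂x₂`. -/
theorem integrated_residual_majorant_2d_square
    (f u v z₁ z₂ u₁ u₂ u₁₁ u₂₂ v₁ v₂ dz₁ dz₂ β₁ β₂ R₁ R₂ : ℝ × ℝ → ℝ)
    (hf : ContinuousOn f (Icc (0:ℝ) 1 ×ˢ Icc (0:ℝ) 1))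
    -- u is twice continuously differentiable on the closed square
    (hu₁ : ∀ p ∈ Icc (0:ℝ) 1 ×ˢ Icc (0:ℝ) 1,
      HasDerivWithinAt (fun t => u (t, p.2)) (u₁ p) (Icc 0 1) p.1)
    (hu₂ : ∀ p ∈ Icc (0:ℝ) 1 ×ˢ Icc (0:ℝ) 1,
      HasDerivWithinAt (fun t => u (p.1, t)) (u₂ p) (Icc 0 1) p.2)
    (hu₁₁ : ∀ p ∈ Icc (0:ℝ) 1 ×ˢ Icc (0:ℝ) 1,
      HasDerivWithinAt (fun t => u₁ (t, p.2)) (u₁₁ p) (Icc 0 1) p.1)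
    (hu₂₂ : ∀ p ∈ Icc (0:ℝ) 1 ×ˢ Icc (0:ℝ) 1,
      HasDerivWithinAt (fun t => u₂ (p.1, t)) (u₂₂ p) (Icc 0 1) p.2)
    (hu₁c : ContinuousOn u₁ (Icc (0:ℝ) 1 ×ˢ Icc (0:ℝ) 1))
    (hu₂c : ContinuousOn u₂ (Icc (0:ℝ) 1 ×ˢ Icc (0:ℝ) 1))
    (hu₁₁c : ContinuousOn u₁₁ (Icc (0:ℝ) 1 ×ˢ Icc (0:ℝ) 1))
    (hu₂₂c : ContinuousOn u₂₂ (Icc (0:ℝ) 1 ×ˢ Icc (0:ℝ) 1))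
    -- −Δu = f in the open square
    (hpde : ∀ p ∈ Ioo (0:ℝ) 1 ×ˢ Ioo (0:ℝ) 1, -(u₁₁ p + u₂₂ p) = f p)
    -- u = 0 on the boundary of the square
    (hubc : ∀ p ∈ Icc (0:ℝ) 1 ×ˢ Icc (0:ℝ) 1,
      (p.1 = 0 ∨ p.1 = 1 ∨ p.2 = 0 ∨ p.2 = 1) → u p = 0)
    -- v is continuously differentiable and vanishes on the boundary
    (hv₁ : ∀ p ∈ Icc (0:ℝ) 1 ×ˢ Icc (0:ℝ) 1,
      HasDerivWithinAt (fun t => v (t, p.2)) (v₁ p) (Icc 0 1) p.1)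
    (hv₂ : ∀ p ∈ Icc (0:ℝ) 1 ×ˢ Icc (0:ℝ) 1,
      HasDerivWithinAt (fun t => v (p.1, t)) (v₂ p) (Icc 0 1) p.2)
    (hv₁c : ContinuousOn v₁ (Icc (0:ℝ) 1 ×ˢ Icc (0:ℝ) 1))
    (hv₂c : ContinuousOn v₂ (Icc (0:ℝ) 1 ×ˢ Icc (0:ℝ) 1))
    (hvbc : ∀ p ∈ Icc (0:ℝ) 1 ×ˢ Icc (0:ℝ) 1,
      (p.1 = 0 ∨ p.1 = 1 ∨ p.2 = 0 ∨ p.2 = 1) → v p = 0)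
    -- z = (z₁, z₂) is a continuously differentiable vector field
    (hz₁c : ContinuousOn z₁ (Icc (0:ℝ) 1 ×ˢ Icc (0:ℝ) 1))
    (hz₂c : ContinuousOn z₂ (Icc (0:ℝ) 1 ×ˢ Icc (0:ℝ) 1))
    (hdz₁ : ∀ p ∈ Icc (0:ℝ) 1 ×ˢ Icc (0:ℝ) 1,
      HasDerivWithinAt (fun t => z₁ (t, p.2)) (dz₁ p) (Icc 0 1) p.1)
    (hdz₂ : ∀ p ∈ Icc (0:ℝ) 1 ×ˢ Icc (0:ℝ) 1,
      HasDerivWithinAt (fun t => z₂ (p.1, t)) (dz₂ p) (Icc 0 1) p.2)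
    (hdz₁c : ContinuousOn dz₁ (Icc (0:ℝ) 1 ×ˢ Icc (0:ℝ) 1))
    (hdz₂c : ContinuousOn dz₂ (Icc (0:ℝ) 1 ×ˢ Icc (0:ℝ) 1))
    -- β₁, β₂ are bounded measurable with β₁ + β₂ ≡ 1
    (hβ₁m : Measurable β₁) (hβ₂m : Measurable β₂)
    (hβ₁b : ∃ C : ℝ, ∀ p, |β₁ p| ≤ C) (hβ₂b : ∃ C : ℝ, ∀ p, |β₂ p| ≤ C)
    (hβsum : ∀ p, β₁ p + β₂ p = 1)
    -- R₁, R₂ are the partial antiderivatives of the weighted residual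
    (hR₁ : ∀ p : ℝ × ℝ, R₁ p =
      ∫ η in (0:ℝ)..p.1, β₁ (η, p.2) * (f (η, p.2) - (dz₁ (η, p.2) + dz₂ (η, p.2))))
    (hR₂ : ∀ p : ℝ × ℝ, R₂ p =
      ∫ η in (0:ℝ)..p.2, β₂ (p.1, η) * (f (p.1, η) - (dz₁ (p.1, η) + dz₂ (p.1, η)))) :
    Real.sqrt (∫ p in Ioo (0:ℝ) 1 ×ˢ Ioo (0:ℝ) 1,
        ((v₁ p - u₁ p) ^ 2 + (v₂ p - u₂ p) ^ 2)) ≤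
      Real.sqrt (∫ p in Ioo (0:ℝ) 1 ×ˢ Ioo (0:ℝ) 1,
          ((v₁ p + z₁ p) ^ 2 + (v₂ p + z₂ p) ^ 2)) +
        (Real.sqrt (∫ p in Ioo (0:ℝ) 1 ×ˢ Ioo (0:ℝ) 1, (R₁ p) ^ 2) +
          Real.sqrt (∫ p in Ioo (0:ℝ) 1 ×ˢ Ioo (0:ℝ) 1, (R₂ p) ^ 2)) := by
  classical
  obtain ⟨C₁, hC₁⟩ := hβ₁b
  obtain ⟨C₂, hC₂⟩ := hβ₂b
  have hC₁0 : 0 ≤ C₁ := le_trans (abs_nonneg _) (hC₁ (0, 0))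
  have hC₂0 : 0 ≤ C₂ := le_trans (abs_nonneg _) (hC₂ (0, 0))
  set w : ℝ × ℝ → ℝ := fun p => v p - u p with hwdef
  set ψ : ℝ × ℝ → ℝ := fun q => f q - (dz₁ q + dz₂ q) with hψdef
  have hψc : ContinuousOn ψ AKK.Q := hf.sub (hdz₁c.add hdz₂c)
  set h : ℝ × ℝ → ℝ := AKK.Q.indicator ψ with hhdef
  have hhm : Measurable h := AKK.measurable_indicator_of_continuousOn AKK.Q_closed hψc
  obtain ⟨Cψ, hCψ⟩ := AKK.Q_compact.exists_bound_of_continuousOn hψc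
  have hhb : ∀ q, |h q| ≤ max Cψ 0 := by
    intro q
    by_cases hq : q ∈ AKK.Q
    · rw [hhdef, Set.indicator_of_mem hq]
      exact le_trans (hCψ q hq) (le_max_left _ _)
    · rw [hhdef, Set.indicator_of_notMem hq]
      simp
  set g₁ : ℝ × ℝ → ℝ := fun q => β₁ q * h q with hg₁def
  set g₂ : ℝ × ℝ → ℝ := fun q => β₂ q * h q with hg₂def
  have hg₁m : Measurable g₁ := hβ₁m.mul hhm
  have hg₂m : Measurable g₂ := hβ₂m.mul hhm
  have hmul_bound : ∀ (a b A B : ℝ), |a| ≤ A → |b| ≤ B → |a * b| ≤ A * B := by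
    intro a b A B ha hb
    rw [abs_mul]
    exact mul_le_mul ha hb (abs_nonneg _) (le_trans (abs_nonneg _) ha)
  have hg₁b : ∀ q, |g₁ q| ≤ C₁ * max Cψ 0 := fun q => hmul_bound _ _ _ _ (hC₁ q) (hhb q)
  have hg₂b : ∀ q, |g₂ q| ≤ C₂ * max Cψ 0 := fun q => hmul_bound _ _ _ _ (hC₂ q) (hhb q)
  set ρ₁ : ℝ × ℝ → ℝ := fun p => ∫ η in (0:ℝ)..p.1, g₁ (η, p.2) with hρ₁def
  set ρ₂ : ℝ × ℝ → ℝ := fun p => ∫ η in (0:ℝ)..p.2, g₂ (p.1, η) with hρ₂def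
  have hρ₁m : Measurable ρ₁ := AKK.measurable_rho g₁ hg₁m
  have hρ₂m : Measurable ρ₂ := by
    rw [hρ₂def]
    exact AKK.measurable_rho' g₂ hg₂m
  have h01 : (0:ℝ) ∈ Icc (0:ℝ) 1 := left_mem_Icc.mpr zero_le_one
  have h11 : (1:ℝ) ∈ Icc (0:ℝ) 1 := right_mem_Icc.mpr zero_le_one
  have hw0x : ∀ y ∈ Icc (0:ℝ) 1, w (0, y) = 0 := fun y hy => by
    simp only [hwdef]
    rw [hvbc (0, y) ⟨h01, hy⟩ (Or.inl rfl), hubc (0, y) ⟨h01, hy⟩ (Or.inl rfl), sub_zero]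
  have hw1x : ∀ y ∈ Icc (0:ℝ) 1, w (1, y) = 0 := fun y hy => by
    simp only [hwdef]
    rw [hvbc (1, y) ⟨h11, hy⟩ (Or.inr (Or.inl rfl)),
      hubc (1, y) ⟨h11, hy⟩ (Or.inr (Or.inl rfl)), sub_zero]
  have hw0y : ∀ x ∈ Icc (0:ℝ) 1, w (x, 0) = 0 := fun x hx => by
    simp only [hwdef]
    rw [hvbc (x, 0) ⟨hx, h01⟩ (Or.inr (Or.inr (Or.inl rfl))),
      hubc (x, 0) ⟨hx, h01⟩ (Or.inr (Or.inr (Or.inl rfl))), sub_zero]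
  have hw1y : ∀ x ∈ Icc (0:ℝ) 1, w (x, 1) = 0 := fun x hx => by
    simp only [hwdef]
    rw [hvbc (x, 1) ⟨hx, h11⟩ (Or.inr (Or.inr (Or.inr rfl))),
      hubc (x, 1) ⟨hx, h11⟩ (Or.inr (Or.inr (Or.inr rfl))), sub_zero]
  have hw₁d : ∀ p ∈ AKK.Q, HasDerivWithinAt (fun t => w (t, p.2)) (v₁ p - u₁ p) (Icc 0 1) p.1 :=
    fun p hp => (hv₁ p hp).sub (hu₁ p hp)
  have hw₂d : ∀ p ∈ AKK.Q, HasDerivWithinAt (fun t => w (p.1, t)) (v₂ p - u₂ p) (Icc 0 1) p.2 :=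
    fun p hp => (hv₂ p hp).sub (hu₂ p hp)
  have hw₁c : ContinuousOn (fun p => v₁ p - u₁ p) AKK.Q := hv₁c.sub hu₁c
  have hw₂c : ContinuousOn (fun p => v₂ p - u₂ p) AKK.Q := hv₂c.sub hu₂c
  have hwc : ContinuousOn w AKK.Q := AKK.contOn_of_partials w _ _ hw₁d hw₂d hw₁c hw₂c
  obtain ⟨Cw, hCw⟩ := AKK.Q_compact.exists_bound_of_continuousOn hwc
  obtain ⟨Cw1, hCw1⟩ := AKK.Q_compact.exists_bound_of_continuousOn hw₁c
  obtain ⟨Cw2, hCw2⟩ := AKK.Q_compact.exists_bound_of_continuousOn hw₂c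
  have habsw : ∀ p ∈ AKK.S, |w p| ≤ Cw := fun p hp => hCw p (AKK.S_subset_Q hp)
  have habsw1 : ∀ p ∈ AKK.S, |v₁ p - u₁ p| ≤ Cw1 := fun p hp => hCw1 p (AKK.S_subset_Q hp)
  have habsw2 : ∀ p ∈ AKK.S, |v₂ p - u₂ p| ≤ Cw2 := fun p hp => hCw2 p (AKK.S_subset_Q hp)
  have hρ₁b : ∀ p ∈ AKK.S, |ρ₁ p| ≤ C₁ * max Cψ 0 := by
    intro p hp
    simp only [hρ₁def]
    have hb := intervalIntegral.norm_integral_le_of_norm_le_const (C := C₁ * max Cψ 0)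
      (f := fun η => g₁ (η, p.2)) (a := 0) (b := p.1)
      (fun x _ => by rw [Real.norm_eq_abs]; exact hg₁b _)
    rw [Real.norm_eq_abs] at hb
    have hp1 : |p.1 - 0| ≤ 1 := by
      rw [sub_zero, abs_of_nonneg hp.1.1.le]; exact hp.1.2.le
    calc |∫ η in (0:ℝ)..p.1, g₁ (η, p.2)| ≤ (C₁ * max Cψ 0) * |p.1 - 0| := hb
    _ ≤ (C₁ * max Cψ 0) * 1 := mul_le_mul_of_nonneg_left hp1 (by positivity)
    _ = C₁ * max Cψ 0 := mul_one _
  have hρ₂b : ∀ p ∈ AKK.S, |ρ₂ p| ≤ C₂ * max Cψ 0 := by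
    intro p hp
    simp only [hρ₂def]
    have hb := intervalIntegral.norm_integral_le_of_norm_le_const (C := C₂ * max Cψ 0)
      (f := fun η => g₂ (p.1, η)) (a := 0) (b := p.2)
      (fun x _ => by rw [Real.norm_eq_abs]; exact hg₂b _)
    rw [Real.norm_eq_abs] at hb
    have hp2 : |p.2 - 0| ≤ 1 := by
      rw [sub_zero, abs_of_nonneg hp.2.1.le]; exact hp.2.2.le
    calc |∫ η in (0:ℝ)..p.2, g₂ (p.1, η)| ≤ (C₂ * max Cψ 0) * |p.2 - 0| := hb
    _ ≤ (C₂ * max Cψ 0) * 1 := mul_le_mul_of_nonneg_left hp2 (by positivity)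
    _ = C₂ * max Cψ 0 := mul_one _
  have hRρ₁ : ∀ p ∈ AKK.Q, R₁ p = ρ₁ p := by
    intro p hp
    rw [hR₁ p]
    simp only [hρ₁def]
    refine intervalIntegral.integral_congr fun η hη => ?_
    rw [uIcc_of_le hp.1.1] at hη
    have hmem : ((η, p.2) : ℝ × ℝ) ∈ AKK.Q := ⟨⟨hη.1, le_trans hη.2 hp.1.2⟩, hp.2⟩
    simp only [hg₁def, hhdef]
    rw [Set.indicator_of_mem hmem]
  have hRρ₂ : ∀ p ∈ AKK.Q, R₂ p = ρ₂ p := by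
    intro p hp
    rw [hR₂ p]
    simp only [hρ₂def]
    refine intervalIntegral.integral_congr fun η hη => ?_
    rw [uIcc_of_le hp.2.1] at hη
    have hmem : ((p.1, η) : ℝ × ℝ) ∈ AKK.Q := ⟨hp.1, ⟨hη.1, le_trans hη.2 hp.2.2⟩⟩
    simp only [hg₂def, hhdef]
    rw [Set.indicator_of_mem hmem]
  -- integrability facts
  have intI : IntegrableOn (fun p => (v₁ p - u₁ p)^2 + (v₂ p - u₂ p)^2) AKK.S :=
    AKK.intS ((hw₁c.pow 2).add (hw₂c.pow 2))
  have intT : IntegrableOn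
      (fun p => (v₁ p - u₁ p)*(v₁ p + z₁ p) + (v₂ p - u₂ p)*(v₂ p + z₂ p)) AKK.S :=
    AKK.intS ((hw₁c.mul (hv₁c.add hz₁c)).add (hw₂c.mul (hv₂c.add hz₂c)))
  have int_w1u1 : IntegrableOn (fun p => (v₁ p - u₁ p) * u₁ p) AKK.S := AKK.intS (hw₁c.mul hu₁c)
  have int_w1z1 : IntegrableOn (fun p => (v₁ p - u₁ p) * z₁ p) AKK.S := AKK.intS (hw₁c.mul hz₁c)
  have int_w2u2 : IntegrableOn (fun p => (v₂ p - u₂ p) * u₂ p) AKK.S := AKK.intS (hw₂c.mul hu₂c)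
  have int_w2z2 : IntegrableOn (fun p => (v₂ p - u₂ p) * z₂ p) AKK.S := AKK.intS (hw₂c.mul hz₂c)
  have int_wu11 : IntegrableOn (fun p => w p * u₁₁ p) AKK.S := AKK.intS (hwc.mul hu₁₁c)
  have int_wu22 : IntegrableOn (fun p => w p * u₂₂ p) AKK.S := AKK.intS (hwc.mul hu₂₂c)
  have int_wdz1 : IntegrableOn (fun p => w p * dz₁ p) AKK.S := AKK.intS (hwc.mul hdz₁c)
  have int_wdz2 : IntegrableOn (fun p => w p * dz₂ p) AKK.S := AKK.intS (hwc.mul hdz₂c)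
  have int_wf : IntegrableOn (fun p => w p * f p) AKK.S := AKK.intS (hwc.mul hf)
  have int_wU : IntegrableOn (fun p => w p * (u₁₁ p + u₂₂ p)) AKK.S :=
    AKK.intS (hwc.mul (hu₁₁c.add hu₂₂c))
  have int_wD : IntegrableOn (fun p => w p * (dz₁ p + dz₂ p)) AKK.S :=
    AKK.intS (hwc.mul (hdz₁c.add hdz₂c))
  have int_wg₁ : IntegrableOn (fun p => w p * g₁ p) AKK.S :=
    AKK.intS_bdd ((AKK.aesmS hwc).mul hg₁m.aestronglyMeasurable)
      (fun p hp => hmul_bound _ _ _ _ (habsw p hp) (hg₁b p))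
  have int_wg₂ : IntegrableOn (fun p => w p * g₂ p) AKK.S :=
    AKK.intS_bdd ((AKK.aesmS hwc).mul hg₂m.aestronglyMeasurable)
      (fun p hp => hmul_bound _ _ _ _ (habsw p hp) (hg₂b p))
  have int_w1ρ₁ : IntegrableOn (fun p => (v₁ p - u₁ p) * ρ₁ p) AKK.S :=
    AKK.intS_bdd ((AKK.aesmS hw₁c).mul hρ₁m.aestronglyMeasurable)
      (fun p hp => hmul_bound _ _ _ _ (habsw1 p hp) (hρ₁b p hp))
  have int_w2ρ₂ : IntegrableOn (fun p => (v₂ p - u₂ p) * ρ₂ p) AKK.S :=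
    AKK.intS_bdd ((AKK.aesmS hw₂c).mul hρ₂m.aestronglyMeasurable)
      (fun p hp => hmul_bound _ _ _ _ (habsw2 p hp) (hρ₂b p hp))
  have int_ρ₁sq : IntegrableOn (fun p => (ρ₁ p)^2) AKK.S :=
    AKK.intS_bdd ((hρ₁m.pow_const 2).aestronglyMeasurable)
      (C := (C₁ * max Cψ 0)^2) (fun p hp => by
        rw [abs_pow]
        exact pow_le_pow_left₀ (abs_nonneg _) (hρ₁b p hp) 2)
  have int_ρ₂sq : IntegrableOn (fun p => (ρ₂ p)^2) AKK.S :=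
    AKK.intS_bdd ((hρ₂m.pow_const 2).aestronglyMeasurable)
      (C := (C₂ * max Cψ 0)^2) (fun p hp => by
        rw [abs_pow]
        exact pow_le_pow_left₀ (abs_nonneg _) (hρ₂b p hp) 2)
  have int_w1sq : IntegrableOn (fun p => (v₁ p - u₁ p)^2) AKK.S := AKK.intS (hw₁c.pow 2)
  have int_w2sq : IntegrableOn (fun p => (v₂ p - u₂ p)^2) AKK.S := AKK.intS (hw₂c.pow 2)
  have intJ : IntegrableOn (fun p => (v₁ p - u₁ p) * u₁ p + (v₁ p - u₁ p) * z₁ p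
      + (v₂ p - u₂ p) * u₂ p + (v₂ p - u₂ p) * z₂ p) AKK.S :=
    AKK.intS ((((hw₁c.mul hu₁c).add (hw₁c.mul hz₁c)).add (hw₂c.mul hu₂c)).add (hw₂c.mul hz₂c))
  -- integration by parts identities
  have eC : ∫ p in AKK.S, (v₁ p - u₁ p) * u₁ p = - ∫ p in AKK.S, w p * u₁₁ p :=
    AKK.parts_x w u₁ (fun p => v₁ p - u₁ p) u₁₁ hw₁d hu₁₁ hwc hu₁c hw₁c hu₁₁c hw0x hw1x
  have eA : ∫ p in AKK.S, (v₁ p - u₁ p) * z₁ p = - ∫ p in AKK.S, w p * dz₁ p :=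
    AKK.parts_x w z₁ (fun p => v₁ p - u₁ p) dz₁ hw₁d hdz₁ hwc hz₁c hw₁c hdz₁c hw0x hw1x
  have eD : ∫ p in AKK.S, (v₂ p - u₂ p) * u₂ p = - ∫ p in AKK.S, w p * u₂₂ p :=
    AKK.parts_y w u₂ (fun p => v₂ p - u₂ p) u₂₂ hw₂d hu₂₂ hwc hu₂c hw₂c hu₂₂c hw0y hw1y
  have eB : ∫ p in AKK.S, (v₂ p - u₂ p) * z₂ p = - ∫ p in AKK.S, w p * dz₂ p :=
    AKK.parts_y w z₂ (fun p => v₂ p - u₂ p) dz₂ hw₂d hdz₂ hwc hz₂c hw₂c hdz₂c hw0y hw1y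
  have eE : ∫ p in AKK.S, (v₁ p - u₁ p) * ρ₁ p = - ∫ p in AKK.S, w p * g₁ p :=
    AKK.parts2_x w (fun p => v₁ p - u₁ p) g₁ ρ₁ hw₁d hw₁c hw0x hw1x hg₁m hg₁b
      (fun p _ => by rw [hρ₁def]) int_w1ρ₁ int_wg₁
  have eF : ∫ p in AKK.S, (v₂ p - u₂ p) * ρ₂ p = - ∫ p in AKK.S, w p * g₂ p :=
    AKK.parts2_y w (fun p => v₂ p - u₂ p) g₂ ρ₂ hw₂d hw₂c hw0y hw1y hg₂m hg₂b
      (fun p _ => by rw [hρ₂def]) int_w2ρ₂ int_wg₂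
  -- algebraic recombination
  have hUsum : (∫ p in AKK.S, w p * u₁₁ p) + (∫ p in AKK.S, w p * u₂₂ p)
      = ∫ p in AKK.S, w p * (u₁₁ p + u₂₂ p) := by
    rw [← MeasureTheory.integral_add int_wu11 int_wu22]
    exact setIntegral_congr_fun AKK.S_meas fun p _ => by ring
  have hDsum : (∫ p in AKK.S, w p * dz₁ p) + (∫ p in AKK.S, w p * dz₂ p)
      = ∫ p in AKK.S, w p * (dz₁ p + dz₂ p) := by
    rw [← MeasureTheory.integral_add int_wdz1 int_wdz2]
    exact setIntegral_congr_fun AKK.S_meas fun p _ => by ring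
  have hpde' : ∫ p in AKK.S, w p * (u₁₁ p + u₂₂ p) = - ∫ p in AKK.S, w p * f p := by
    rw [← MeasureTheory.integral_neg]
    refine setIntegral_congr_fun AKK.S_meas fun p hp => ?_
    have hq := hpde p hp
    rw [← hq]
    ring
  have hGsum : (∫ p in AKK.S, w p * g₁ p) + (∫ p in AKK.S, w p * g₂ p)
      = (∫ p in AKK.S, w p * f p) - ∫ p in AKK.S, w p * (dz₁ p + dz₂ p) := by
    rw [← MeasureTheory.integral_add int_wg₁ int_wg₂, ← MeasureTheory.integral_sub int_wf int_wD]
    refine setIntegral_congr_fun AKK.S_meas fun p hp => ?_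
    have hmem : p ∈ AKK.Q := AKK.S_subset_Q hp
    simp only [hg₁def, hg₂def, hhdef]
    rw [Set.indicator_of_mem hmem]
    simp only [hψdef]
    have hb := hβsum p
    linear_combination (w p * (f p - (dz₁ p + dz₂ p))) * hb
  have hIsplit : ∫ p in AKK.S, ((v₁ p - u₁ p)^2 + (v₂ p - u₂ p)^2)
      = (∫ p in AKK.S, ((v₁ p - u₁ p)*(v₁ p + z₁ p) + (v₂ p - u₂ p)*(v₂ p + z₂ p)))
        - (∫ p in AKK.S, ((v₁ p - u₁ p) * u₁ p + (v₁ p - u₁ p) * z₁ p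
            + (v₂ p - u₂ p) * u₂ p + (v₂ p - u₂ p) * z₂ p)) := by
    rw [← MeasureTheory.integral_sub intT intJ]
    exact setIntegral_congr_fun AKK.S_meas fun p _ => by ring
  have i12 : IntegrableOn (fun p => (v₁ p - u₁ p) * u₁ p + (v₁ p - u₁ p) * z₁ p) AKK.S :=
    int_w1u1.add int_w1z1
  have i123 : IntegrableOn (fun p => (v₁ p - u₁ p) * u₁ p + (v₁ p - u₁ p) * z₁ p
      + (v₂ p - u₂ p) * u₂ p) AKK.S := i12.add int_w2u2
  have t1 : (∫ p in AKK.S, ((v₁ p - u₁ p) * u₁ p + (v₁ p - u₁ p) * z₁ p))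
      = (∫ p in AKK.S, (v₁ p - u₁ p) * u₁ p) + (∫ p in AKK.S, (v₁ p - u₁ p) * z₁ p) :=
    MeasureTheory.integral_add int_w1u1 int_w1z1
  have t2 : (∫ p in AKK.S, ((v₁ p - u₁ p) * u₁ p + (v₁ p - u₁ p) * z₁ p
        + (v₂ p - u₂ p) * u₂ p))
      = (∫ p in AKK.S, ((v₁ p - u₁ p) * u₁ p + (v₁ p - u₁ p) * z₁ p))
        + (∫ p in AKK.S, (v₂ p - u₂ p) * u₂ p) :=
    MeasureTheory.integral_add i12 int_w2u2
  have t3 : (∫ p in AKK.S, ((v₁ p - u₁ p) * u₁ p + (v₁ p - u₁ p) * z₁ p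
        + (v₂ p - u₂ p) * u₂ p + (v₂ p - u₂ p) * z₂ p))
      = (∫ p in AKK.S, ((v₁ p - u₁ p) * u₁ p + (v₁ p - u₁ p) * z₁ p
        + (v₂ p - u₂ p) * u₂ p))
        + (∫ p in AKK.S, (v₂ p - u₂ p) * z₂ p) :=
    MeasureTheory.integral_add i123 int_w2z2
  have hkey : ∫ p in AKK.S, ((v₁ p - u₁ p)^2 + (v₂ p - u₂ p)^2)
      = (∫ p in AKK.S, ((v₁ p - u₁ p)*(v₁ p + z₁ p) + (v₂ p - u₂ p)*(v₂ p + z₂ p)))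
        + (∫ p in AKK.S, (v₁ p - u₁ p) * ρ₁ p) + (∫ p in AKK.S, (v₂ p - u₂ p) * ρ₂ p) := by
    linarith [hIsplit, t1, t2, t3, eA, eB, eC, eD, eE, eF, hUsum, hDsum, hpde', hGsum]
  -- Cauchy–Schwarz estimates
  have hI0 : 0 ≤ ∫ p in AKK.S, ((v₁ p - u₁ p)^2 + (v₂ p - u₂ p)^2) :=
    setIntegral_nonneg AKK.S_meas fun p _ => by positivity
  have hsq1 : (fun p : ℝ × ℝ => (Real.sqrt ((v₁ p - u₁ p)^2 + (v₂ p - u₂ p)^2))^2)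
      = fun p => ((v₁ p - u₁ p)^2 + (v₂ p - u₂ p)^2) :=
    funext fun p => Real.sq_sqrt (by positivity)
  have hsq2 : (fun p : ℝ × ℝ => (Real.sqrt ((v₁ p + z₁ p)^2 + (v₂ p + z₂ p)^2))^2)
      = fun p => ((v₁ p + z₁ p)^2 + (v₂ p + z₂ p)^2) :=
    funext fun p => Real.sq_sqrt (by positivity)
  have hac : ContinuousOn (fun p => Real.sqrt ((v₁ p - u₁ p)^2 + (v₂ p - u₂ p)^2)) AKK.Q :=
    Real.continuous_sqrt.comp_continuousOn ((hw₁c.pow 2).add (hw₂c.pow 2))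
  have hbc : ContinuousOn (fun p => Real.sqrt ((v₁ p + z₁ p)^2 + (v₂ p + z₂ p)^2)) AKK.Q :=
    Real.continuous_sqrt.comp_continuousOn
      (((hv₁c.add hz₁c).pow 2).add ((hv₂c.add hz₂c).pow 2))
  have hTle1 : (∫ p in AKK.S, ((v₁ p - u₁ p)*(v₁ p + z₁ p) + (v₂ p - u₂ p)*(v₂ p + z₂ p)))
      ≤ ∫ p in AKK.S, (Real.sqrt ((v₁ p - u₁ p)^2 + (v₂ p - u₂ p)^2)
          * Real.sqrt ((v₁ p + z₁ p)^2 + (v₂ p + z₂ p)^2)) :=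
    setIntegral_mono_on intT (AKK.intS (hac.mul hbc)) AKK.S_meas
      (fun p _ => AKK.ptCS _ _ _ _)
  have hcs1 := AKK.integral_mul_le_sqrt_mul_sqrt (volume.restrict AKK.S)
    (fun p => Real.sqrt ((v₁ p - u₁ p)^2 + (v₂ p - u₂ p)^2))
    (fun p => Real.sqrt ((v₁ p + z₁ p)^2 + (v₂ p + z₂ p)^2))
    (by rw [show (fun p : ℝ × ℝ => (Real.sqrt ((v₁ p - u₁ p)^2 + (v₂ p - u₂ p)^2))^2)
        = fun p => ((v₁ p - u₁ p)^2 + (v₂ p - u₂ p)^2) from hsq1]; exact intI)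
    (by rw [show (fun p : ℝ × ℝ => (Real.sqrt ((v₁ p + z₁ p)^2 + (v₂ p + z₂ p)^2))^2)
        = fun p => ((v₁ p + z₁ p)^2 + (v₂ p + z₂ p)^2) from hsq2]
        exact AKK.intS (((hv₁c.add hz₁c).pow 2).add ((hv₂c.add hz₂c).pow 2)))
    (AKK.intS (hac.mul hbc))
  simp only [hsq1, hsq2] at hcs1
  have hTle : (∫ p in AKK.S, ((v₁ p - u₁ p)*(v₁ p + z₁ p) + (v₂ p - u₂ p)*(v₂ p + z₂ p)))
      ≤ Real.sqrt (∫ p in AKK.S, ((v₁ p - u₁ p)^2 + (v₂ p - u₂ p)^2))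
        * Real.sqrt (∫ p in AKK.S, ((v₁ p + z₁ p)^2 + (v₂ p + z₂ p)^2)) :=
    le_trans hTle1 hcs1
  have hcsE1 := AKK.integral_mul_le_sqrt_mul_sqrt (volume.restrict AKK.S)
    (fun p => v₁ p - u₁ p) ρ₁ int_w1sq int_ρ₁sq int_w1ρ₁
  have hcsE2 := AKK.integral_mul_le_sqrt_mul_sqrt (volume.restrict AKK.S)
    (fun p => v₂ p - u₂ p) ρ₂ int_w2sq int_ρ₂sq int_w2ρ₂
  have hw1I : Real.sqrt (∫ p in AKK.S, (v₁ p - u₁ p)^2)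
      ≤ Real.sqrt (∫ p in AKK.S, ((v₁ p - u₁ p)^2 + (v₂ p - u₂ p)^2)) :=
    Real.sqrt_le_sqrt (setIntegral_mono_on int_w1sq intI AKK.S_meas
      (fun p _ => by nlinarith [sq_nonneg (v₂ p - u₂ p)]))
  have hw2I : Real.sqrt (∫ p in AKK.S, (v₂ p - u₂ p)^2)
      ≤ Real.sqrt (∫ p in AKK.S, ((v₁ p - u₁ p)^2 + (v₂ p - u₂ p)^2)) :=
    Real.sqrt_le_sqrt (setIntegral_mono_on int_w2sq intI AKK.S_meas
      (fun p _ => by nlinarith [sq_nonneg (v₁ p - u₁ p)]))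
  have hE1le : (∫ p in AKK.S, (v₁ p - u₁ p) * ρ₁ p)
      ≤ Real.sqrt (∫ p in AKK.S, ((v₁ p - u₁ p)^2 + (v₂ p - u₂ p)^2))
        * Real.sqrt (∫ p in AKK.S, (ρ₁ p)^2) :=
    le_trans hcsE1 (mul_le_mul_of_nonneg_right hw1I (Real.sqrt_nonneg _))
  have hE2le : (∫ p in AKK.S, (v₂ p - u₂ p) * ρ₂ p)
      ≤ Real.sqrt (∫ p in AKK.S, ((v₁ p - u₁ p)^2 + (v₂ p - u₂ p)^2))
        * Real.sqrt (∫ p in AKK.S, (ρ₂ p)^2) :=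
    le_trans hcsE2 (mul_le_mul_of_nonneg_right hw2I (Real.sqrt_nonneg _))
  -- final assembly
  have hR1eq : (∫ p in AKK.S, (R₁ p)^2) = ∫ p in AKK.S, (ρ₁ p)^2 :=
    setIntegral_congr_fun AKK.S_meas fun p hp => by rw [hRρ₁ p (AKK.S_subset_Q hp)]
  have hR2eq : (∫ p in AKK.S, (R₂ p)^2) = ∫ p in AKK.S, (ρ₂ p)^2 :=
    setIntegral_congr_fun AKK.S_meas fun p hp => by rw [hRρ₂ p (AKK.S_subset_Q hp)]
  show Real.sqrt (∫ p in AKK.S, ((v₁ p - u₁ p) ^ 2 + (v₂ p - u₂ p) ^ 2))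
      ≤ Real.sqrt (∫ p in AKK.S, ((v₁ p + z₁ p) ^ 2 + (v₂ p + z₂ p) ^ 2))
        + (Real.sqrt (∫ p in AKK.S, (R₁ p) ^ 2) + Real.sqrt (∫ p in AKK.S, (R₂ p) ^ 2))
  rw [hR1eq, hR2eq]
  rcases eq_or_lt_of_le hI0 with h0 | hpos
  · rw [← h0, Real.sqrt_zero]
    positivity
  · have hsI : 0 < Real.sqrt (∫ p in AKK.S, ((v₁ p - u₁ p)^2 + (v₂ p - u₂ p)^2)) :=
      Real.sqrt_pos.mpr hpos
    refine le_of_mul_le_mul_left ?_ hsI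
    calc Real.sqrt (∫ p in AKK.S, ((v₁ p - u₁ p)^2 + (v₂ p - u₂ p)^2))
          * Real.sqrt (∫ p in AKK.S, ((v₁ p - u₁ p)^2 + (v₂ p - u₂ p)^2))
        = ∫ p in AKK.S, ((v₁ p - u₁ p)^2 + (v₂ p - u₂ p)^2) := Real.mul_self_sqrt hI0
    _ = (∫ p in AKK.S, ((v₁ p - u₁ p)*(v₁ p + z₁ p) + (v₂ p - u₂ p)*(v₂ p + z₂ p)))
        + (∫ p in AKK.S, (v₁ p - u₁ p) * ρ₁ p) + (∫ p in AKK.S, (v₂ p - u₂ p) * ρ₂ p) := hkey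
    _ ≤ Real.sqrt (∫ p in AKK.S, ((v₁ p - u₁ p)^2 + (v₂ p - u₂ p)^2))
        * (Real.sqrt (∫ p in AKK.S, ((v₁ p + z₁ p)^2 + (v₂ p + z₂ p)^2))
          + (Real.sqrt (∫ p in AKK.S, (ρ₁ p)^2) + Real.sqrt (∫ p in AKK.S, (ρ₂ p)^2))) := by
        have hexp : Real.sqrt (∫ p in AKK.S, ((v₁ p - u₁ p)^2 + (v₂ p - u₂ p)^2))
            * (Real.sqrt (∫ p in AKK.S, ((v₁ p + z₁ p)^2 + (v₂ p + z₂ p)^2))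
              + (Real.sqrt (∫ p in AKK.S, (ρ₁ p)^2) + Real.sqrt (∫ p in AKK.S, (ρ₂ p)^2)))
            = Real.sqrt (∫ p in AKK.S, ((v₁ p - u₁ p)^2 + (v₂ p - u₂ p)^2))
              * Real.sqrt (∫ p in AKK.S, ((v₁ p + z₁ p)^2 + (v₂ p + z₂ p)^2))
              + Real.sqrt (∫ p in AKK.S, ((v₁ p - u₁ p)^2 + (v₂ p - u₂ p)^2))
              * Real.sqrt (∫ p in AKK.S, (ρ₁ p)^2)
              + Real.sqrt (∫ p in AKK.S, ((v₁ p - u₁ p)^2 + (v₂ p - u₂ p)^2))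
              * Real.sqrt (∫ p in AKK.S, (ρ₂ p)^2) := by ring
        rw [hexp]
        linarith [hTle, hE1le, hE2le]
end

section
/- Let f be continuous on [0,1]. Let u be twice continuously differentiable on [0,1] with −u''(x) = f(x) for all x ∈ [0,1] and u(0) = u(1) = 0; let v be continuously differentiable on [0,1] with v(0) = v(1) = 0; let z be continuously differentiable on [0,1]. Then (∫₀¹((v−u)')² dx)^{1/2} ≤ (∫₀¹(v'+z)² dx)^{1/2} + ( ∫₀¹ ( ∫₀^x (f(η) − z'(η)) dη )² dx )^{1/2}. -/
open Set intervalIntegral MeasureTheory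

/-- Cauchy–Schwarz for interval integrals of continuous functions on `[0,1]`. -/
lemma cs_interval {g h : ℝ → ℝ} (hg : ContinuousOn g (Icc 0 1))
    (hh : ContinuousOn h (Icc 0 1)) :
    ∫ x in (0:ℝ)..1, g x * h x ≤
      Real.sqrt (∫ x in (0:ℝ)..1, g x ^ 2) * Real.sqrt (∫ x in (0:ℝ)..1, h x ^ 2) := by
  have hIcc : ∀ F : ℝ → ℝ, (∫ x in (0:ℝ)..1, F x) = ∫ x in Icc (0:ℝ) 1, F x := by
    intro F
    rw [intervalIntegral.integral_of_le zero_le_one, ← integral_Icc_eq_integral_Ioc]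
  set μ : Measure ℝ := volume.restrict (Icc (0:ℝ) 1) with hμ
  haveI : IsFiniteMeasure μ := by
    constructor
    rw [hμ, Measure.restrict_apply_univ, Real.volume_Icc]
    exact ENNReal.ofReal_lt_top
  have hmem : ∀ {F : ℝ → ℝ}, ContinuousOn F (Icc 0 1) → MemLp F (ENNReal.ofReal 2) μ := by
    intro F hF
    obtain ⟨C, hC⟩ := isCompact_Icc.exists_bound_of_continuousOn hF
    exact MemLp.of_bound (hF.aestronglyMeasurable measurableSet_Icc) C
      ((ae_restrict_iff' measurableSet_Icc).2 (Filter.Eventually.of_forall hC))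
  have hpq : (2:ℝ).HolderConjugate 2 := Real.HolderConjugate.two_two
  have hCS := MeasureTheory.integral_mul_norm_le_Lp_mul_Lq hpq (hmem hg) (hmem hh)
  have hrpow : ∀ y : ℝ, ‖y‖ ^ (2:ℝ) = y ^ 2 := by
    intro y
    rw [show (2:ℝ) = ((2:ℕ):ℝ) by norm_num, Real.rpow_natCast, Real.norm_eq_abs, sq_abs]
  simp only [hrpow] at hCS
  have h1 : (∫ a, g a * h a ∂μ) ≤ ∫ a, ‖g a‖ * ‖h a‖ ∂μ := by
    refine integral_mono ?_ ?_ ?_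
    · exact ((hg.mul hh).integrableOn_compact isCompact_Icc)
    · exact ((hg.norm.mul hh.norm).integrableOn_compact isCompact_Icc)
    · intro x
      calc g x * h x ≤ |g x * h x| := le_abs_self _
        _ = ‖g x‖ * ‖h x‖ := by rw [abs_mul]; rfl
  rw [hIcc (fun x => g x * h x), hIcc (fun x => g x ^ 2), hIcc (fun x => h x ^ 2)]
  calc (∫ x in Icc (0:ℝ) 1, g x * h x) = ∫ a, g a * h a ∂μ := rfl
    _ ≤ (∫ a, g a ^ 2 ∂μ) ^ (1/(2:ℝ)) * (∫ a, h a ^ 2 ∂μ) ^ (1/(2:ℝ)) := h1.trans hCS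
    _ = Real.sqrt (∫ x in Icc (0:ℝ) 1, g x ^ 2) * Real.sqrt (∫ x in Icc (0:ℝ) 1, h x ^ 2) := by
        rw [Real.sqrt_eq_rpow, Real.sqrt_eq_rpow]

/-- One-dimensional instance of the integrated-residual majorant (1.6) for the
Poisson Dirichlet problem `−u'' = f`, `u(0) = u(1) = 0`. -/
theorem integrated_residual_majorant_1d
    (f u u' u'' v v' z z' : ℝ → ℝ)
    (hf : ContinuousOn f (Icc 0 1))
    (hu' : ∀ x ∈ Icc (0:ℝ) 1, HasDerivWithinAt u (u' x) (Icc 0 1) x)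
    (hu'' : ∀ x ∈ Icc (0:ℝ) 1, HasDerivWithinAt u' (u'' x) (Icc 0 1) x)
    (hu''c : ContinuousOn u'' (Icc 0 1))
    (hode : ∀ x ∈ Icc (0:ℝ) 1, -u'' x = f x)
    (hu0 : u 0 = 0) (hu1 : u 1 = 0)
    (hv' : ∀ x ∈ Icc (0:ℝ) 1, HasDerivWithinAt v (v' x) (Icc 0 1) x)
    (hv'c : ContinuousOn v' (Icc 0 1))
    (hv0 : v 0 = 0) (hv1 : v 1 = 0)
    (hz' : ∀ x ∈ Icc (0:ℝ) 1, HasDerivWithinAt z (z' x) (Icc 0 1) x)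
    (hz'c : ContinuousOn z' (Icc 0 1)) :
    Real.sqrt (∫ x in (0:ℝ)..1, (v' x - u' x) ^ 2) ≤
      Real.sqrt (∫ x in (0:ℝ)..1, (v' x + z x) ^ 2) +
        Real.sqrt (∫ x in (0:ℝ)..1, (∫ η in (0:ℝ)..x, (f η - z' η)) ^ 2) := by
  have hu'c : ContinuousOn u' (Icc 0 1) := fun x hx => (hu'' x hx).continuousWithinAt
  have hzc : ContinuousOn z (Icc 0 1) := fun x hx => (hz' x hx).continuousWithinAt
  set w : ℝ → ℝ := fun x => f x - z' x with hw
  have hwc : ContinuousOn w (Icc 0 1) := hf.sub hz'c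
  set R : ℝ → ℝ := fun x => ∫ η in (0:ℝ)..x, w η with hRdef
  -- FTC-1: derivative of R
  have hR' : ∀ x ∈ Icc (0:ℝ) 1, HasDerivWithinAt R (w x) (Icc 0 1) x := by
    intro x hx
    haveI : Fact (x ∈ Icc (0:ℝ) 1) := ⟨hx⟩
    refine intervalIntegral.integral_hasDerivWithinAt_right ?_ ?_ (hwc x hx)
    · refine (hwc.mono ?_).intervalIntegrable
      rw [uIcc_of_le hx.1]
      exact Icc_subset_Icc le_rfl hx.2
    · exact hwc.stronglyMeasurableAtFilter_nhdsWithin measurableSet_Icc x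
  have hRc : ContinuousOn R (Icc 0 1) := fun x hx => (hR' x hx).continuousWithinAt
  -- Step A: -u' - z = c + R on [0,1]
  set c : ℝ := -u' 0 - z 0 with hc
  have key : ∀ x ∈ Icc (0:ℝ) 1, -u' x - z x = c + R x := by
    have hconst := constant_of_has_deriv_right_zero
      (f := fun x => -u' x - z x - R x) (a := 0) (b := 1)
      (((hu'c.neg).sub hzc).sub hRc) ?_
    · intro x hx
      have h0 : R 0 = 0 := intervalIntegral.integral_same
      have := hconst x hx
      simp only [h0, sub_zero] at this
      linarith [this]
    · intro x hx
      have hx' : x ∈ Icc (0:ℝ) 1 := ⟨hx.1, hx.2.le⟩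
      have h1 : HasDerivWithinAt (fun x => -u' x - z x - R x)
          (-u'' x - z' x - w x) (Icc 0 1) x :=
        (((hu'' x hx').neg).sub (hz' x hx')).sub (hR' x hx')
      have h2 := h1.mono_of_mem_nhdsWithin (Icc_mem_nhdsGE_of_mem hx)
      have h3 : -u'' x - z' x - w x = 0 := by
        have := hode x hx'
        simp only [hw]
        linarith
      rwa [h3] at h2
  -- Step B: ∫ (v' - u') = 0
  have hinte : ∫ x in (0:ℝ)..1, (v' x - u' x) = 0 := by
    have := intervalIntegral.integral_eq_sub_of_hasDeriv_right_of_le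
      (f := fun x => v x - u x) (f' := fun x => v' x - u' x) zero_le_one
      (fun x hx => ((hv' x hx).sub (hu' x hx)).continuousWithinAt)
      (fun x hx => ((hv' x ⟨hx.1.le, hx.2.le⟩).sub (hu' x ⟨hx.1.le, hx.2.le⟩)).mono_of_mem_nhdsWithin
        (Icc_mem_nhdsGT_of_mem ⟨hx.1.le, hx.2⟩))
      ((hv'c.sub hu'c).mono (by rw [uIcc_of_le zero_le_one]) |>.intervalIntegrable)
    rw [this]
    simp [hu0, hu1, hv0, hv1]
  set e : ℝ → ℝ := fun x => v' x - u' x with he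
  have hec : ContinuousOn e (Icc 0 1) := hv'c.sub hu'c
  -- integrability helpers
  have hint : ∀ {F : ℝ → ℝ}, ContinuousOn F (Icc 0 1) → IntervalIntegrable F volume 0 1 := by
    intro F hF
    exact (hF.mono (by rw [uIcc_of_le zero_le_one])).intervalIntegrable
  -- Step C: the energy identity
  have hsplit : (∫ x in (0:ℝ)..1, e x ^ 2) =
      (∫ x in (0:ℝ)..1, e x * (v' x + z x)) + ∫ x in (0:ℝ)..1, e x * R x := by
    have hEq : EqOn (fun x => e x ^ 2)
        (fun x => e x * (v' x + z x) + (c * e x + e x * R x)) (uIcc 0 1) := by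
      rw [uIcc_of_le zero_le_one]
      intro x hx
      have hk := key x hx
      simp only [he]
      have h2 : c = -u' x - z x - R x := by linarith
      rw [h2]
      ring
    rw [intervalIntegral.integral_congr hEq]
    have i1 : IntervalIntegrable (fun x => e x * (v' x + z x)) volume 0 1 :=
      hint (hec.mul (hv'c.add hzc))
    have i2 : IntervalIntegrable (fun x => c * e x) volume 0 1 :=
      hint ((continuousOn_const).mul hec)
    have i3 : IntervalIntegrable (fun x => e x * R x) volume 0 1 := hint (hec.mul hRc)
    rw [intervalIntegral.integral_add i1 (i2.add i3), intervalIntegral.integral_add i2 i3,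
      intervalIntegral.integral_const_mul, hinte]
    ring
  -- Cauchy–Schwarz applications
  set A : ℝ := ∫ x in (0:ℝ)..1, e x ^ 2 with hA
  set B : ℝ := ∫ x in (0:ℝ)..1, (v' x + z x) ^ 2 with hB
  set C : ℝ := ∫ x in (0:ℝ)..1, R x ^ 2 with hC
  have cs1 : (∫ x in (0:ℝ)..1, e x * (v' x + z x)) ≤ Real.sqrt A * Real.sqrt B :=
    cs_interval hec (hv'c.add hzc)
  have cs2 : (∫ x in (0:ℝ)..1, e x * R x) ≤ Real.sqrt A * Real.sqrt C :=
    cs_interval hec hRc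
  have hA0 : 0 ≤ A := intervalIntegral.integral_nonneg zero_le_one (fun x _ => sq_nonneg _)
  have hmain : Real.sqrt A ≤ Real.sqrt B + Real.sqrt C := by
    rcases eq_or_lt_of_le (Real.sqrt_nonneg A) with h | h
    · rw [← h]
      positivity
    · have hsq : Real.sqrt A * Real.sqrt A = A := Real.mul_self_sqrt hA0
      have h4 : A ≤ Real.sqrt A * Real.sqrt B + Real.sqrt A * Real.sqrt C := by
        nth_rewrite 1 [hsplit]
        exact add_le_add cs1 cs2
      have h5 : Real.sqrt A * Real.sqrt A ≤ Real.sqrt A * (Real.sqrt B + Real.sqrt C) := by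
        rw [hsq]
        linarith
      exact le_of_mul_le_mul_left h5 h
  exact hmain
end

section
/- Let E, F, σ, σ* be real numbers with E ≥ 0, F ≥ 0, σ* > 0, 0 ≤ σ ≤ σ*, and σ*·F² ≤ E². Then E² + σ*·F² ≤ (2σ*/(σ* + σ))·(E² + σ·F²). -/
/-- Key real-number inequality in the proof of Theorem 2: under the
Friedrichs-type hypothesis `σ* F² ≤ E²`, the `σ*`-weighted combination is
bounded by `2σ*/(σ*+σ)` times the energy combination. -/
theorem key_inequality_theorem2
    (E F σ σs : ℝ) (hE : 0 ≤ E) (hF : 0 ≤ F) (hσs : 0 < σs)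
    (hσ0 : 0 ≤ σ) (hσ : σ ≤ σs) (hfried : σs * F ^ 2 ≤ E ^ 2) :
    E ^ 2 + σs * F ^ 2 ≤ (2 * σs / (σs + σ)) * (E ^ 2 + σ * F ^ 2) := by
  rw [div_mul_eq_mul_div, le_div_iff₀ (by linarith)]
  nlinarith [mul_nonneg (sub_nonneg.2 hσ) (sub_nonneg.2 hfried)]
end

section
/- Let V be a real inner product space, b : V × V → ℝ a symmetric bilinear form with b(w,w) ≥ 0 for all w ∈ V, σ ≥ 0 a real number, S a linear subspace of V, and u ∈ V. Suppose u₀ ∈ S satisfies ⟨u − u₀, χ⟩ = 0 for all χ ∈ S, and u_σ ∈ S satisfies ⟨u − u_σ, χ⟩ + σ·b(u − u_σ, χ) = 0 for all χ ∈ S. Then ‖u − u₀‖ ≤ ‖u − u_σ‖ and b(u − u_σ, u − u_σ) ≤ b(u − u₀, u − u₀). -/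
/-- Abstract form of the comparison (2.12) between the Galerkin errors for the
reaction–diffusion form `⟨·,·⟩ + σ b` and for the pure diffusion form `⟨·,·⟩`. -/
theorem galerkin_error_comparison
    {V : Type*} [NormedAddCommGroup V] [InnerProductSpace ℝ V]
    (b : V →ₗ[ℝ] V →ₗ[ℝ] ℝ)
    (hbsymm : ∀ w w' : V, b w w' = b w' w)
    (hbpos : ∀ w : V, 0 ≤ b w w)
    (σ : ℝ) (hσ : 0 ≤ σ)
    (S : Submodule ℝ V) (u u₀ uσ : V)
    (hu₀S : u₀ ∈ S) (huσS : uσ ∈ S)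
    (hgal₀ : ∀ χ ∈ S, (inner ℝ (u - u₀) χ : ℝ) = 0)
    (hgalσ : ∀ χ ∈ S, (inner ℝ (u - uσ) χ : ℝ) + σ * b (u - uσ) χ = 0) :
    ‖u - u₀‖ ≤ ‖u - uσ‖ ∧ b (u - uσ) (u - uσ) ≤ b (u - u₀) (u - u₀) := by
  set e₀ := u - u₀ with he₀
  set eσ := u - uσ with heσ
  have hdS : uσ - u₀ ∈ S := S.sub_mem huσS hu₀S
  have hdef : e₀ - eσ = uσ - u₀ := by rw [he₀, heσ]; abel
  have h1 : (inner ℝ e₀ (uσ - u₀) : ℝ) = 0 := hgal₀ _ hdS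
  have h2 : (inner ℝ eσ (uσ - u₀) : ℝ) + σ * b eσ (uσ - u₀) = 0 := hgalσ _ hdS
  -- inner ℝ products
  have hsplit : (inner ℝ e₀ e₀ : ℝ) = inner ℝ e₀ eσ + inner ℝ e₀ (uσ - u₀) := by
    rw [← inner_add_right]
    congr 1
    rw [← hdef]; abel
  have h3 : (inner ℝ e₀ e₀ : ℝ) = inner ℝ e₀ eσ := by rw [hsplit, h1, add_zero]
  have hCS : (inner ℝ e₀ eσ : ℝ) ≤ ‖e₀‖ * ‖eσ‖ := real_inner_le_norm e₀ eσ
  have hsq : ‖e₀‖ ^ 2 = (inner ℝ e₀ e₀ : ℝ) := (real_inner_self_eq_norm_sq e₀).symm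
  have hn0 : (0:ℝ) ≤ ‖e₀‖ := norm_nonneg _
  have hn1 : (0:ℝ) ≤ ‖eσ‖ := norm_nonneg _
  have hfirst : ‖e₀‖ ≤ ‖eσ‖ := by nlinarith [hsq, h3, hCS]
  refine ⟨hfirst, ?_⟩
  rcases eq_or_lt_of_le hσ with hσ0 | hσ0
  · -- σ = 0 : then uσ = u₀
    have h2' : (inner ℝ eσ (uσ - u₀) : ℝ) = 0 := by
      have := h2; rw [← hσ0] at this; linarith
    have : (inner ℝ (uσ - u₀) (uσ - u₀) : ℝ) = 0 := by
      have : (inner ℝ (e₀ - eσ) (uσ - u₀) : ℝ) = 0 := by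
        rw [inner_sub_left, h1, h2']; ring
      rwa [hdef] at this
    have hd0 : uσ - u₀ = 0 := by
      exact (inner_self_eq_zero (𝕜 := ℝ) (x := uσ - u₀)).mp this
    have : uσ = u₀ := by
      have := sub_eq_zero.mp hd0; exact this
    rw [heσ, he₀, this]
  · -- σ > 0
    have hinner_eσd : (inner ℝ eσ (uσ - u₀) : ℝ) = inner ℝ e₀ e₀ - inner ℝ eσ eσ := by
      rw [← hdef, inner_sub_right]
      have hsym : (inner ℝ eσ e₀ : ℝ) = inner ℝ e₀ eσ := real_inner_comm _ _
      rw [hsym, ← h3]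
    have hle0 : (inner ℝ eσ (uσ - u₀) : ℝ) ≤ 0 := by
      rw [hinner_eσd]
      nlinarith [real_inner_self_eq_norm_sq e₀, real_inner_self_eq_norm_sq eσ, hfirst, hn0, hn1]
    have hb_d : σ * b eσ (uσ - u₀) ≥ 0 := by linarith
    have hbd : b eσ (uσ - u₀) ≥ 0 := nonneg_of_mul_nonneg_right hb_d hσ0
    have hexp : b eσ (uσ - u₀) = b eσ e₀ - b eσ eσ := by
      rw [← hdef]; simp [map_sub]
    have hkey : b eσ eσ ≤ b eσ e₀ := by linarith [hexp ▸ hbd]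
    have hpos : 0 ≤ b (eσ - e₀) (eσ - e₀) := hbpos _
    have hexpand : b (eσ - e₀) (eσ - e₀) = b eσ eσ - 2 * b eσ e₀ + b e₀ e₀ := by
      simp [map_sub, LinearMap.sub_apply]
      have := hbsymm e₀ eσ
      linarith
    nlinarith [hpos, hexpand, hkey]
end

section
/- Let V and H be real inner product spaces and T : V → H a real-linear map. Let σ* > 0 and σ be real numbers with 0 ≤ σ ≤ σ*, and let e, g ∈ V and r ∈ H satisfy ‖e‖_V² + σ‖T e‖_H² = ⟨g, e⟩_V + ⟨r, T e⟩_H and σ*‖T e‖_H² ≤ ‖e‖_V². Then (‖e‖_V² + σ‖T e‖_H²)^{1/2} ≤ (2σ*/(σ* + σ))·( ‖g‖_V² + (1/σ*)·‖r‖_H² )^{1/2}. -/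
set_option maxHeartbeats 1600000 in
/-- Norm (non-squared) form (2.7) of the paper's main majorant, case `σ ≤ σ*`. -/
theorem majorant_norm_form_abstract
    {V H : Type*} [NormedAddCommGroup V] [InnerProductSpace ℝ V]
    [NormedAddCommGroup H] [InnerProductSpace ℝ H]
    (T : V →ₗ[ℝ] H) (σs σ : ℝ) (hσs : 0 < σs) (hσ0 : 0 ≤ σ) (hσ : σ ≤ σs)
    (e g : V) (r : H)
    (hres : ‖e‖ ^ 2 + σ * ‖T e‖ ^ 2 = (inner ℝ g e : ℝ) + (inner ℝ r (T e) : ℝ))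
    (hemb : σs * ‖T e‖ ^ 2 ≤ ‖e‖ ^ 2) :
    Real.sqrt (‖e‖ ^ 2 + σ * ‖T e‖ ^ 2) ≤
      (2 * σs / (σs + σ)) * Real.sqrt (‖g‖ ^ 2 + (1 / σs) * ‖r‖ ^ 2) := by
  set a := ‖e‖ with ha
  set b := ‖T e‖ with hb
  set G := ‖g‖ with hG
  set R := ‖r‖ with hR
  set E2 := a ^ 2 + σ * b ^ 2 with hE2
  set M2 := G ^ 2 + (1 / σs) * R ^ 2 with hM2
  set c := 2 * σs / (σs + σ) with hc
  clear_value a b G R E2 M2 c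
  have hσsσ : 0 < σs + σ := by linarith
  have ha0 : 0 ≤ a := ha ▸ norm_nonneg _
  have hb0 : 0 ≤ b := hb ▸ norm_nonneg _
  have hG0 : 0 ≤ G := hG ▸ norm_nonneg _
  have hR0 : 0 ≤ R := hR ▸ norm_nonneg _
  have hE20 : 0 ≤ E2 := by
    rw [hE2]
    have := sq_nonneg a; have := sq_nonneg b
    nlinarith
  have hM20 : 0 ≤ M2 := by
    rw [hM2]
    have h1 : (0:ℝ) ≤ 1 / σs := one_div_nonneg.mpr hσs.le
    nlinarith [sq_nonneg G, sq_nonneg R, mul_nonneg h1 (sq_nonneg R)]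
  have hc1 : 1 ≤ c := by
    rw [hc, le_div_iff₀ hσsσ]; linarith
  have hc0 : 0 ≤ c := by linarith
  -- step 1: E2 ≤ G*a + R*b
  have h1 : E2 ≤ G * a + R * b := by
    rw [hres, hG, ha, hR, hb]
    have := real_inner_le_norm g e
    have := real_inner_le_norm r (T e)
    linarith
  -- step 2: weighted Cauchy-Schwarz
  have h2 : (G * a + R * b) ^ 2 ≤ M2 * (a ^ 2 + σs * b ^ 2) := by
    have key : σs * (G * a + R * b) ^ 2 ≤ (σs * G ^ 2 + R ^ 2) * (a ^ 2 + σs * b ^ 2) := by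
      nlinarith [sq_nonneg (σs * G * b - R * a)]
    have hM2' : σs * M2 = σs * G ^ 2 + R ^ 2 := by
      rw [hM2]; field_simp
    have : σs * ((G * a + R * b) ^ 2) ≤ σs * (M2 * (a ^ 2 + σs * b ^ 2)) := by
      calc σs * ((G * a + R * b) ^ 2) ≤ (σs * G ^ 2 + R ^ 2) * (a ^ 2 + σs * b ^ 2) := key
        _ = σs * (M2 * (a ^ 2 + σs * b ^ 2)) := by rw [← hM2']; ring
    exact le_of_mul_le_mul_left this hσs
  -- step 3: a^2 + σs*b^2 ≤ c*E2
  have h3 : a ^ 2 + σs * b ^ 2 ≤ c * E2 := by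
    rw [hc, hE2, div_mul_eq_mul_div, le_div_iff₀ hσsσ]
    nlinarith [hemb]
  -- combine: E2 ≤ c * M2
  have hE2le : E2 ≤ c * M2 := by
    rcases eq_or_lt_of_le hE20 with h | h
    · rw [← h]; positivity
    · have hS0 : 0 ≤ G * a + R * b := le_trans hE20 h1
      have hsq : E2 ^ 2 ≤ (G * a + R * b) ^ 2 := by nlinarith
      have : E2 ^ 2 ≤ M2 * (c * E2) :=
        le_trans (le_trans hsq h2) (mul_le_mul_of_nonneg_left h3 hM20)
      have h4 : E2 * E2 ≤ (c * M2) * E2 := by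
        calc E2 * E2 = E2 ^ 2 := (pow_two E2).symm
          _ ≤ M2 * (c * E2) := this
          _ = (c * M2) * E2 := by ring
      exact le_of_mul_le_mul_right h4 h
  have hcc : Real.sqrt c ≤ c := by
    have hcsq : c ≤ c ^ 2 := by nlinarith [mul_nonneg (sub_nonneg.mpr hc1) hc0]
    have h := Real.sqrt_le_sqrt hcsq
    rwa [Real.sqrt_sq hc0] at h
  calc Real.sqrt E2 ≤ Real.sqrt (c * M2) := Real.sqrt_le_sqrt hE2le
    _ = Real.sqrt c * Real.sqrt M2 := Real.sqrt_mul hc0 _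
    _ ≤ c * Real.sqrt M2 := mul_le_mul_of_nonneg_right hcc (Real.sqrt_nonneg _)
end
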